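/- arXiv:1601.03693 — 4 statements merged into one kernel-verified Lean document; each statement's English description precedes it below -/
import Mathlib

section
/- Let (G, G_•) be a filtered group and for each upper face F(v) = {u ∈ {0,1}^n : supp(u) ⊇ supp(v)} and g ∈ G let g^{F(v)} denote the map equal to g on F(v) and the identity elsewhere. Then an element q ∈ G^{{0,1}^n} lies in the subgroup C^n(G_•) generated by the face groups if and only if q admits a unique factorization q = g_0^{F_0} g_1^{F_1} ⋯ g_{2^n−1}^{F_{2^n−1}}, where F_0 < F_1 < ⋯ < F_{2^n−1} are the upper faces of {0,1}^n ordered by the colex order of their defining vertices and g_i ∈ G_{codim(F_i)} for each i. -/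
open Finset

/-- Embedding of the discrete cube `{0,1}^n` into `ℤ^n`. -/
def cubeEmb {n : ℕ} (v : Fin n → Bool) : Fin n → ℤ := fun i => if v i then 1 else 0

/-- A discrete-cube morphism: the restriction to `{0,1}^m` of an affine
homomorphism `ℤ^m → ℤ^n`. -/
def IsCubeMorphism {m n : ℕ} (φ : (Fin m → Bool) → (Fin n → Bool)) : Prop :=
  ∃ (M : (Fin m → ℤ) →+ (Fin n → ℤ)) (t : Fin n → ℤ),
    ∀ v : Fin m → Bool, cubeEmb (φ v) = M (cubeEmb v) + t

/-- A face of `{0,1}^n` of codimension `c`: fix `c` coordinates. -/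
def IsFaceOfCodim {n : ℕ} (F : Set (Fin n → Bool)) (c : ℕ) : Prop :=
  ∃ (I : Finset (Fin n)) (x : Fin n → Bool), I.card = c ∧
    F = {v : Fin n → Bool | ∀ i ∈ I, v i = x i}

/-- An `m`-face map into `{0,1}^n`: an injective cube morphism whose image is
an `m`-dimensional face. -/
def IsFaceMap {m n : ℕ} (φ : (Fin m → Bool) → (Fin n → Bool)) : Prop :=
  IsCubeMorphism φ ∧ Function.Injective φ ∧ IsFaceOfCodim (Set.range φ) (n - m)

/-- The number of coordinates of `v` equal to `1`. -/
def weight {n : ℕ} (v : Fin n → Bool) : ℕ := (Finset.univ.filter fun i => v i = true).card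

/-- A (pre)filtration on a group: a decreasing chain of subgroups with
`[G_i, G_j] ⊆ G_{i+j}`. -/
def IsFiltrationOfGroup {G : Type*} [Group G] (Gf : ℕ → Subgroup G) : Prop :=
  (∀ i, Gf (i + 1) ≤ Gf i) ∧
  (∀ i j : ℕ, ∀ x ∈ Gf i, ∀ y ∈ Gf j, x⁻¹ * y⁻¹ * x * y ∈ Gf (i + j))

open Classical in
/-- The face-group element `g^F`: equal to `g` on `F` and to the identity elsewhere. -/
noncomputable def faceEl {G : Type*} [Group G] {n : ℕ} (F : Set (Fin n → Bool)) (g : G) :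
    (Fin n → Bool) → G :=
  fun v => if v ∈ F then g else 1

/-- The Host–Kra cube group `C^n(G_•)`: the subgroup of `G^{{0,1}^n}` generated by
the face groups. -/
noncomputable def hkCubes {G : Type*} [Group G] (Gf : ℕ → Subgroup G) (n : ℕ) :
    Subgroup ((Fin n → Bool) → G) :=
  Subgroup.closure { f | ∃ (c : ℕ) (F : Set (Fin n → Bool)) (g : G),
    IsFaceOfCodim F c ∧ g ∈ Gf c ∧ f = faceEl F g }

/-- Restriction of a map on `{0,1}^{n+1}` to the lower face `{v : v_j = 0}`,
viewed as a map on `{0,1}^n`. -/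
def lowerFaceRestr {X : Type*} {n : ℕ} (q : (Fin (n + 1) → Bool) → X) (j : Fin (n + 1)) :
    (Fin n → Bool) → X :=
  fun v => q (j.insertNth false v)

/-- An `(n+1)`-corner: every restriction to an `n`-face containing `0^{n+1}` is a cube. -/
def IsNSCorner {X : Type*} (C : ∀ n, ((Fin n → Bool) → X) → Prop) (n : ℕ)
    (q' : (Fin (n + 1) → Bool) → X) : Prop :=
  ∀ j : Fin (n + 1), C n (lowerFaceRestr q' j)

/-- `q` is a completion of the corner `q'`. -/
def IsNSCompletion {X : Type*} (C : ∀ n, ((Fin n → Bool) → X) → Prop) (n : ℕ)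
    (q' q : (Fin (n + 1) → Bool) → X) : Prop :=
  C (n + 1) q ∧ ∀ v : Fin (n + 1) → Bool, v ≠ (fun _ => true) → q v = q' v

/-- The nilspace axioms: composition, ergodicity and corner completion. -/
def IsNilspace {X : Type*} (C : ∀ n, ((Fin n → Bool) → X) → Prop) : Prop :=
  (∀ (m n : ℕ) (φ : (Fin m → Bool) → (Fin n → Bool)), IsCubeMorphism φ →
      ∀ q, C n q → C m (q ∘ φ)) ∧
  (∀ q : (Fin 1 → Bool) → X, C 1 q) ∧
  (∀ n (q' : (Fin (n + 1) → Bool) → X), IsNSCorner C n q' → ∃ q, IsNSCompletion C n q' q)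

/-- A `k`-step nilspace: a nilspace in which every `(k+1)`-corner has a unique
completion. -/
def IsKStepNilspace {X : Type*} (C : ∀ n, ((Fin n → Bool) → X) → Prop) (k : ℕ) : Prop :=
  IsNilspace C ∧
  ∀ q' : (Fin (k + 1) → Bool) → X, IsNSCorner C k q' → ∃! q, IsNSCompletion C k q' q

/-- The Gray-code alternating product `σ_n`. -/
def graySigma {G : Type*} [Group G] : (n : ℕ) → ((Fin n → Bool) → G) → G
  | 0, g => g (fun i => i.elim0)
  | n + 1, g => (graySigma n (fun v => g (Fin.snoc v true)))⁻¹ *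
      graySigma n (fun v => g (Fin.snoc v false))

/-- The difference operator `∂_h g (x) = g(x)⁻¹ g(xh)`. -/
def mulDiff {H G : Type*} [Group H] [Group G] (h : H) (g : H → G) : H → G :=
  fun x => (g x)⁻¹ * g (x * h)

/-- `g : H → G` is a polynomial map adapted to the filtrations `H_•, G_•`. -/
def IsPolyMap {H G : Type*} [Group H] [Group G] (Hf : ℕ → Subgroup H)
    (Gf : ℕ → Subgroup G) (g : H → G) : Prop :=
  ∀ (n : ℕ) (d : Fin n → ℕ) (h : Fin n → H), (∀ j, h j ∈ Hf (d j)) →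
    ∀ x : H, ((List.ofFn h).foldr mulDiff g) x ∈ Gf (∑ j, d j)

/-- The `k`-arrow `⟨q_0, q_1⟩_k : {0,1}^{n+k} → X`. -/
def arrowMap {X : Type*} {n k : ℕ} (q0 q1 : (Fin n → Bool) → X) :
    (Fin (n + k) → Bool) → X :=
  fun v =>
    if ∀ j : Fin k, v (Fin.natAdd n j) = true
    then q1 (fun i => v (Fin.castAdd k i))
    else q0 (fun i => v (Fin.castAdd k i))

/-- The vertex of `{0,1}^n` whose coordinates are the binary digits of `j`
(so that increasing `j` is the colex order). -/
def vtxOf {n : ℕ} (j : Fin (2 ^ n)) : Fin n → Bool := fun i => Nat.testBit j.1 i.1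

/-- The upper face `F(v) = {u : supp(u) ⊇ supp(v)}`. -/
def upperFaceSet {n : ℕ} (v : Fin n → Bool) : Set (Fin n → Bool) :=
  {u | ∀ i, v i = true → u i = true}

section Helpers
variable {G : Type*} [Group G] {n : ℕ}

lemma faceEl_one (F : Set (Fin n → Bool)) : faceEl F (1 : G) = 1 := by
  funext v; simp [faceEl]

lemma faceEl_mul (F : Set (Fin n → Bool)) (a b : G) :
    faceEl F a * faceEl F b = faceEl F (a * b) := by
  funext v; by_cases h : v ∈ F <;> simp [faceEl, h]

lemma faceEl_inv (F : Set (Fin n → Bool)) (a : G) : (faceEl F a)⁻¹ = faceEl F a⁻¹ := by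
  funext v; by_cases h : v ∈ F <;> simp [faceEl, h]

/-- index of a vertex -/
def idxOf (v : Fin n → Bool) : Fin (2 ^ n) :=
  finFunctionFinEquiv (fun i => if v i then 1 else 0)

lemma vtxOf_idxOf (v : Fin n → Bool) : vtxOf (idxOf v) = v := by
  funext i
  have h : ((finFunctionFinEquiv.symm (idxOf v)) i : ℕ) = (idxOf v : ℕ) / 2 ^ (i : ℕ) % 2 := rfl
  rw [idxOf, Equiv.symm_apply_apply] at h
  unfold vtxOf
  rw [Nat.testBit_eq_decide_div_mod_eq, idxOf, ← h]
  cases hv : v i <;> simp [hv]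

lemma idxOf_vtxOf (j : Fin (2 ^ n)) : idxOf (vtxOf j) = j := by
  have : (fun i => if vtxOf j i then (1 : Fin 2) else 0) = finFunctionFinEquiv.symm j := by
    funext i
    have h : ((finFunctionFinEquiv.symm j) i : ℕ) = (j : ℕ) / 2 ^ (i : ℕ) % 2 := rfl
    have h2 : (j : ℕ) / 2 ^ (i : ℕ) % 2 < 2 := Nat.mod_lt _ (by norm_num)
    unfold vtxOf
    rw [Nat.testBit_eq_decide_div_mod_eq]
    apply Fin.ext
    rw [h]
    interval_cases h3 : (j : ℕ) / 2 ^ (i : ℕ) % 2 <;> simp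
  rw [idxOf, this, Equiv.apply_symm_apply]

lemma testBit_imp_le {a b : ℕ} (h : ∀ i, a.testBit i = true → b.testBit i = true) : a ≤ b := by
  have hab : a &&& b = a := by
    apply Nat.eq_of_testBit_eq
    intro i
    rw [Nat.testBit_and]
    cases ha : a.testBit i
    · simp
    · simp [h i ha]
  calc a = a &&& b := hab.symm
    _ ≤ b := Nat.and_le_right

lemma vtx_le {a b : Fin (2 ^ n)} (h : ∀ i, vtxOf a i = true → vtxOf b i = true) :
    (a : ℕ) ≤ (b : ℕ) := by
  apply testBit_imp_le
  intro i hi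
  by_cases hin : i < n
  · exact h ⟨i, hin⟩ hi
  · exfalso
    rw [Nat.testBit_lt_two_pow (lt_of_lt_of_le a.2 (Nat.pow_le_pow_right (by norm_num) (le_of_not_gt hin)))] at hi
    exact Bool.false_ne_true hi

/-- The OR of two vertices, as an index. -/
def orFin (a b : Fin (2 ^ n)) : Fin (2 ^ n) := ⟨(a : ℕ) ||| (b : ℕ), Nat.or_lt_two_pow a.2 b.2⟩

lemma vtxOf_orFin (a b : Fin (2 ^ n)) (i : Fin n) :
    vtxOf (orFin a b) i = (vtxOf a i || vtxOf b i) := Nat.testBit_or _ _ _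

lemma le_orFin_left (a b : Fin (2 ^ n)) : (a : ℕ) ≤ (orFin a b : ℕ) :=
  vtx_le (fun i hi => by rw [vtxOf_orFin, hi, Bool.true_or])

lemma mem_upperFaceSet_orFin (a b : Fin (2 ^ n)) (u : Fin n → Bool) :
    u ∈ upperFaceSet (vtxOf (orFin a b)) ↔
      u ∈ upperFaceSet (vtxOf a) ∧ u ∈ upperFaceSet (vtxOf b) := by
  simp only [upperFaceSet, Set.mem_setOf_eq]
  constructor
  · intro h
    exact ⟨fun i hi => h i (by rw [vtxOf_orFin, hi, Bool.true_or]),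
           fun i hi => h i (by rw [vtxOf_orFin, hi, Bool.or_true])⟩
  · rintro ⟨h1, h2⟩ i hi
    rw [vtxOf_orFin] at hi
    rcases Bool.or_eq_true_iff.mp hi with h | h
    · exact h1 i h
    · exact h2 i h

lemma weight_orFin_le (a b : Fin (2 ^ n)) :
    weight (vtxOf (orFin a b)) ≤ weight (vtxOf a) + weight (vtxOf b) := by
  unfold weight
  calc (Finset.univ.filter fun i => vtxOf (orFin a b) i = true).card
      ≤ ((Finset.univ.filter fun i => vtxOf a i = true) ∪
         (Finset.univ.filter fun i => vtxOf b i = true)).card := by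
        apply Finset.card_le_card
        intro i hi
        simp only [Finset.mem_filter, Finset.mem_univ, true_and, Finset.mem_union] at *
        rw [vtxOf_orFin] at hi
        exact Bool.or_eq_true_iff.mp hi
    _ ≤ _ := Finset.card_union_le _ _

lemma self_mem_upperFaceSet (v : Fin n → Bool) : v ∈ upperFaceSet v := fun _ hi => hi

end Helpers
section PP
variable {G : Type*} [Group G] {n : ℕ}

/-- Factor associated to index `j`. -/
noncomputable def fg (g : Fin (2 ^ n) → G) (j : Fin (2 ^ n)) : (Fin n → Bool) → G :=
  faceEl (upperFaceSet (vtxOf j)) (g j)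

/-- Partial ordered product over indices `≥ t`. -/
noncomputable def PP (t : ℕ) (g : Fin (2 ^ n) → G) : (Fin n → Bool) → G :=
  (((List.finRange (2 ^ n)).drop t).map (fg g)).prod

lemma PP_nil {t : ℕ} (h : 2 ^ n ≤ t) (g : Fin (2 ^ n) → G) : PP t g = 1 := by
  unfold PP
  rw [List.drop_eq_nil_of_le (by rwa [List.length_finRange])]
  rfl

lemma PP_cons {t : ℕ} (h : t < 2 ^ n) (g : Fin (2 ^ n) → G) :
    PP t g = fg g ⟨t, h⟩ * PP (t + 1) g := by
  unfold PP
  rw [List.drop_eq_getElem_cons (by rwa [List.length_finRange]), List.map_cons, List.prod_cons,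
    List.getElem_finRange]
  rfl

lemma list_prod_apply (l : List ((Fin n → Bool) → G)) (u : Fin n → Bool) :
    l.prod u = (l.map (fun f => f u)).prod := by
  induction l with
  | nil => rfl
  | cons f l ih => rw [List.prod_cons, Pi.mul_apply, ih, List.map_cons, List.prod_cons]

lemma PP_apply_one : ∀ (d t : ℕ), 2 ^ n ≤ t + d → ∀ (g : Fin (2 ^ n) → G) (u : Fin n → Bool),
    (∀ j : Fin (2 ^ n), t ≤ (j : ℕ) → u ∉ upperFaceSet (vtxOf j)) → PP t g u = 1 := by
  intro d
  induction d with
  | zero => intro t ht g u _; rw [PP_nil (by omega)]; rfl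
  | succ d ih =>
    intro t ht g u hu
    by_cases h : t < 2 ^ n
    · rw [PP_cons h, Pi.mul_apply, ih (t + 1) (by omega) g u (fun j hj => hu j (by omega))]
      have : fg g ⟨t, h⟩ u = 1 := by
        unfold fg faceEl
        rw [if_neg (hu ⟨t, h⟩ (le_refl _))]
      rw [this, mul_one]
    · rw [PP_nil (by omega)]; rfl

lemma PP_apply_self {t : ℕ} (h : t < 2 ^ n) (g : Fin (2 ^ n) → G) :
    PP t g (vtxOf ⟨t, h⟩) = g ⟨t, h⟩ := by
  rw [PP_cons h, Pi.mul_apply]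
  have h1 : fg g ⟨t, h⟩ (vtxOf ⟨t, h⟩) = g ⟨t, h⟩ := by
    unfold fg faceEl
    rw [if_pos (self_mem_upperFaceSet _)]
  have h2 : PP (t + 1) g (vtxOf ⟨t, h⟩) = 1 := by
    apply PP_apply_one (2 ^ n) (t + 1) (by omega)
    intro j hj hmem
    have := vtx_le (a := j) (b := ⟨t, h⟩) (fun i hi => hmem i hi)
    have h3 : ((⟨t, h⟩ : Fin (2 ^ n)) : ℕ) = t := rfl
    rw [h3] at this
    omega
  rw [h1, h2, mul_one]

lemma PP_congr : ∀ (d t : ℕ), 2 ^ n ≤ t + d → ∀ (g g' : Fin (2 ^ n) → G),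
    (∀ j : Fin (2 ^ n), t ≤ (j : ℕ) → g j = g' j) → PP t g = PP t g' := by
  intro d
  induction d with
  | zero => intro t ht g g' _; rw [PP_nil (by omega), PP_nil (by omega)]
  | succ d ih =>
    intro t ht g g' hgg
    by_cases h : t < 2 ^ n
    · rw [PP_cons h, PP_cons h, ih (t + 1) (by omega) g g' (fun j hj => hgg j (by omega))]
      unfold fg
      rw [hgg ⟨t, h⟩ (le_refl _)]
    · rw [PP_nil (by omega), PP_nil (by omega)]

/-- skipping initial trivial factors -/
lemma PP_skip : ∀ (d t : ℕ), ∀ (g : Fin (2 ^ n) → G),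
    (∀ j : Fin (2 ^ n), t ≤ (j : ℕ) → (j : ℕ) < t + d → g j = 1) → PP t g = PP (t + d) g := by
  intro d
  induction d with
  | zero => intro t g _; rfl
  | succ d ih =>
    intro t g hg
    by_cases h : t < 2 ^ n
    · rw [PP_cons h]
      have : fg g ⟨t, h⟩ = 1 := by
        unfold fg
        rw [hg ⟨t, h⟩ (le_refl _) (show ((⟨t, h⟩ : Fin (2 ^ n)) : ℕ) < t + (d + 1) by
          show t < t + (d + 1); omega), faceEl_one]
      rw [this, one_mul]
      have := ih (t + 1) g (fun j h1 h2 => hg j (by omega) (by omega))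
      rw [show t + 1 + d = t + (d + 1) by omega] at this
      exact this
    · rw [PP_nil (by omega), PP_nil (by omega)]

lemma PP_single (j : Fin (2 ^ n)) (a : G) :
    ∀ (d t : ℕ), 2 ^ n ≤ t + d →
      PP t (fun j' => if j' = j then a else 1) =
        if t ≤ (j : ℕ) then faceEl (upperFaceSet (vtxOf j)) a else 1 := by
  intro d
  induction d with
  | zero =>
    intro t ht
    rw [PP_nil (by omega), if_neg (by have := j.2; omega)]
  | succ d ih =>
    intro t ht
    by_cases h : t < 2 ^ n
    · rw [PP_cons h, ih (t + 1) (by omega)]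
      by_cases hj : t = (j : ℕ)
      · have hjj : (⟨t, h⟩ : Fin (2 ^ n)) = j := Fin.ext hj
        rw [if_neg (by omega), if_pos (by omega), mul_one]
        unfold fg
        simp [hjj]
      · have hjj : (⟨t, h⟩ : Fin (2 ^ n)) ≠ j := fun hc => hj (congrArg Fin.val hc)
        have : fg (fun j' => if j' = j then a else 1) ⟨t, h⟩ = 1 := by
          unfold fg
          simp only [if_neg hjj, faceEl_one]
        rw [this, one_mul]
        by_cases ht' : t ≤ (j : ℕ)
        · rw [if_pos (by omega), if_pos ht']
        · rw [if_neg (by omega), if_neg ht']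
    · rw [PP_nil (by omega), if_neg (by have := j.2; omega)]

end PP
section Sset
variable {G : Type*} [Group G] {n : ℕ} (Gf : ℕ → Subgroup G)

/-- ordered products over indices `≥ t` with filtration memberships -/
def Sset (t : ℕ) : Set ((Fin n → Bool) → G) :=
  {q | ∃ g : Fin (2 ^ n) → G, (∀ j, g j ∈ Gf (weight (vtxOf j))) ∧ q = PP t g}

lemma Gf_anti (hGf : IsFiltrationOfGroup Gf) {i j : ℕ} (h : i ≤ j) : Gf j ≤ Gf i := by
  induction j, h using Nat.le_induction with
  | base => exact le_refl _
  | succ j hj ih => exact le_trans (hGf.1 j) ih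

lemma one_mem_Sset (t : ℕ) : (1 : (Fin n → Bool) → G) ∈ Sset Gf t := by
  refine ⟨fun _ => 1, fun j => one_mem _, ?_⟩
  rw [PP_skip (2 ^ n) t _ (fun j _ _ => rfl), PP_nil (by omega)]

lemma Sset_mono {t s : ℕ} (h : t ≤ s) : Sset (n := n) Gf s ⊆ Sset Gf t := by
  rintro q ⟨g, hgm, rfl⟩
  refine ⟨fun j => if (j : ℕ) < s then 1 else g j, ?_, ?_⟩
  · intro j; by_cases hj : (j : ℕ) < s <;> simp [hj, one_mem, hgm j]
  · rw [PP_skip (s - t) t _ (fun j h1 h2 => by simp only [if_pos (show (j:ℕ) < s by omega)]),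
      show t + (s - t) = s by omega]
    exact (PP_congr (2 ^ n) s (by omega) _ _
      (fun j hj => by simp only [if_neg (show ¬ (j:ℕ) < s by omega)])).symm

lemma single_mem_Sset {t : ℕ} {j : Fin (2 ^ n)} {a : G} (ht : t ≤ (j : ℕ))
    (ha : a ∈ Gf (weight (vtxOf j))) : faceEl (upperFaceSet (vtxOf j)) a ∈ Sset Gf t := by
  classical
  refine ⟨fun j' => if j' = j then a else 1, ?_, ?_⟩
  · intro j'; by_cases hj : j' = j
    · subst hj; simpa using ha
    · simp [hj, one_mem]
  · rw [PP_single j a (2 ^ n) t (by omega), if_pos ht]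

lemma prepend_Sset {t : ℕ} (h : t < 2 ^ n) {a : G} {q : (Fin n → Bool) → G}
    (ha : a ∈ Gf (weight (vtxOf ⟨t, h⟩))) (hq : q ∈ Sset Gf (t + 1)) :
    faceEl (upperFaceSet (vtxOf ⟨t, h⟩)) a * q ∈ Sset Gf t := by
  classical
  obtain ⟨g, hgm, rfl⟩ := hq
  refine ⟨Function.update g ⟨t, h⟩ a, ?_, ?_⟩
  · intro j; by_cases hj : j = ⟨t, h⟩
    · subst hj; simpa using ha
    · simpa [Function.update_of_ne hj] using hgm j
  · rw [PP_cons h]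
    have h1 : fg (Function.update g ⟨t, h⟩ a) ⟨t, h⟩ = faceEl (upperFaceSet (vtxOf ⟨t, h⟩)) a := by
      unfold fg; rw [Function.update_self]
    have h2 : PP (t + 1) (Function.update g ⟨t, h⟩ a) = PP (t + 1) g := by
      apply PP_congr (2 ^ n) (t + 1) (by omega)
      intro j hj
      have hval : (j : ℕ) ≠ t := by omega
      have : j ≠ ⟨t, h⟩ := fun hc => hval (by rw [hc])
      rw [Function.update_of_ne this]
    rw [h1, h2]

lemma conj_faceEl (j m : Fin (2 ^ n)) (b a : G) :
    (faceEl (upperFaceSet (vtxOf m)) a)⁻¹ * faceEl (upperFaceSet (vtxOf j)) b *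
        faceEl (upperFaceSet (vtxOf m)) a =
      faceEl (upperFaceSet (vtxOf j)) b *
        faceEl (upperFaceSet (vtxOf (orFin j m))) (b⁻¹ * a⁻¹ * b * a) := by
  funext v
  have hor := mem_upperFaceSet_orFin j m v
  by_cases hj : v ∈ upperFaceSet (vtxOf j) <;> by_cases hm : v ∈ upperFaceSet (vtxOf m) <;>
    simp [faceEl, hj, hm, hor] <;> group

lemma conj_single_mem (hGf : IsFiltrationOfGroup Gf) (j m : Fin (2 ^ n)) {b a : G}
    (hb : b ∈ Gf (weight (vtxOf j))) (ha : a ∈ Gf (weight (vtxOf m))) :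
    (faceEl (upperFaceSet (vtxOf m)) a)⁻¹ * faceEl (upperFaceSet (vtxOf j)) b *
      faceEl (upperFaceSet (vtxOf m)) a ∈ Sset Gf (j : ℕ) := by
  rw [conj_faceEl]
  have hc : b⁻¹ * a⁻¹ * b * a ∈ Gf (weight (vtxOf (orFin j m))) :=
    Gf_anti Gf hGf (weight_orFin_le j m) (hGf.2 _ _ b hb a ha)
  by_cases h : orFin j m = j
  · rw [h] at hc ⊢
    rw [faceEl_mul]
    exact single_mem_Sset Gf (le_refl _) (mul_mem hb hc)
  · have hlt : (j : ℕ) < (orFin j m : ℕ) :=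
      lt_of_le_of_ne (le_orFin_left j m) (fun hc' => h (Fin.ext hc').symm)
    have h2 : faceEl (upperFaceSet (vtxOf (orFin j m))) (b⁻¹ * a⁻¹ * b * a) ∈
        Sset Gf ((j : ℕ) + 1) := single_mem_Sset Gf (by omega) hc
    have h3 := prepend_Sset Gf j.2 (a := b) (by simpa using hb) h2
    simpa using h3

lemma Sset_closed_of_ge {t : ℕ} (h : 2 ^ n ≤ t) :
    (∀ p q : (Fin n → Bool) → G, p ∈ Sset Gf t → q ∈ Sset Gf t → p * q ∈ Sset Gf t) ∧
    (∀ p : (Fin n → Bool) → G, p ∈ Sset Gf t → p⁻¹ ∈ Sset Gf t) := by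
  have hone : ∀ p : (Fin n → Bool) → G, p ∈ Sset Gf t → p = 1 := by
    rintro p ⟨g, _, rfl⟩; exact PP_nil h g
  refine ⟨fun p q hp hq => ?_, fun p hp => ?_⟩
  · rw [hone p hp, hone q hq, one_mul]; exact one_mem_Sset Gf t
  · rw [hone p hp, inv_one]; exact one_mem_Sset Gf t

lemma Sset_closed (hGf : IsFiltrationOfGroup Gf) : ∀ (d t : ℕ), 2 ^ n ≤ t + d →
    (∀ p q : (Fin n → Bool) → G, p ∈ Sset Gf t → q ∈ Sset Gf t → p * q ∈ Sset Gf t) ∧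
    (∀ p : (Fin n → Bool) → G, p ∈ Sset Gf t → p⁻¹ ∈ Sset Gf t) := by
  intro d
  induction d with
  | zero => intro t ht; exact Sset_closed_of_ge Gf (by omega)
  | succ d ih =>
    intro t ht
    by_cases h : t < 2 ^ n
    · obtain ⟨ihmul, ihinv⟩ := ih (t + 1) (by omega)
      have conjA : ∀ (m : Fin (2 ^ n)) (a : G), a ∈ Gf (weight (vtxOf m)) →
          ∀ p ∈ Sset Gf (t + 1),
          (faceEl (upperFaceSet (vtxOf m)) a)⁻¹ * p * faceEl (upperFaceSet (vtxOf m)) a ∈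
            Sset Gf (t + 1) := by
        intro m a ha p hp
        obtain ⟨g, hgm, rfl⟩ := hp
        have aux : ∀ (d' t' : ℕ), 2 ^ n ≤ t' + d' → t + 1 ≤ t' →
            (faceEl (upperFaceSet (vtxOf m)) a)⁻¹ * PP t' g *
              faceEl (upperFaceSet (vtxOf m)) a ∈ Sset Gf (t + 1) := by
          intro d'
          induction d' with
          | zero =>
            intro t' h1 h2
            rw [PP_nil (by omega), mul_one, inv_mul_cancel]
            exact one_mem_Sset Gf (t + 1)
          | succ d' ihd =>
            intro t' h1 h2
            by_cases h' : t' < 2 ^ n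
            · rw [PP_cons h']
              have split : (faceEl (upperFaceSet (vtxOf m)) a)⁻¹ *
                    (fg g ⟨t', h'⟩ * PP (t' + 1) g) * faceEl (upperFaceSet (vtxOf m)) a =
                  ((faceEl (upperFaceSet (vtxOf m)) a)⁻¹ * fg g ⟨t', h'⟩ *
                      faceEl (upperFaceSet (vtxOf m)) a) *
                    ((faceEl (upperFaceSet (vtxOf m)) a)⁻¹ * PP (t' + 1) g *
                      faceEl (upperFaceSet (vtxOf m)) a) := by group
              rw [split]
              apply ihmul
              · exact Sset_mono Gf (show t + 1 ≤ ((⟨t', h'⟩ : Fin (2 ^ n)) : ℕ) from h2)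
                  (conj_single_mem Gf hGf ⟨t', h'⟩ m (hgm _) ha)
              · exact ihd (t' + 1) (by omega) (by omega)
            · rw [PP_nil (by omega), mul_one, inv_mul_cancel]
              exact one_mem_Sset Gf (t + 1)
        exact aux (2 ^ n) (t + 1) (by omega) (le_refl _)
      constructor
      · intro p q hp hq
        obtain ⟨gp, hgp, rfl⟩ := hp
        obtain ⟨gq, hgq, rfl⟩ := hq
        rw [PP_cons h (g := gp), PP_cons h (g := gq)]
        have key : fg gp ⟨t, h⟩ * PP (t + 1) gp * (fg gq ⟨t, h⟩ * PP (t + 1) gq) =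
            (fg gp ⟨t, h⟩ * fg gq ⟨t, h⟩) *
              (((fg gq ⟨t, h⟩)⁻¹ * PP (t + 1) gp * fg gq ⟨t, h⟩) * PP (t + 1) gq) := by group
        rw [key]
        have hmerge : fg gp ⟨t, h⟩ * fg gq ⟨t, h⟩ =
            faceEl (upperFaceSet (vtxOf ⟨t, h⟩)) (gp ⟨t, h⟩ * gq ⟨t, h⟩) := by
          unfold fg; rw [faceEl_mul]
        rw [hmerge]
        apply prepend_Sset Gf h (mul_mem (hgp _) (hgq _))
        apply ihmul
        · exact conjA ⟨t, h⟩ (gq ⟨t, h⟩) (hgq _) _ ⟨gp, hgp, rfl⟩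
        · exact ⟨gq, hgq, rfl⟩
      · intro p hp
        obtain ⟨g, hgm, rfl⟩ := hp
        rw [PP_cons h]
        have key : (fg g ⟨t, h⟩ * PP (t + 1) g)⁻¹ =
            (fg g ⟨t, h⟩)⁻¹ *
              (((fg g ⟨t, h⟩)⁻¹)⁻¹ * (PP (t + 1) g)⁻¹ * (fg g ⟨t, h⟩)⁻¹) := by group
        rw [key]
        have hinv : (fg g ⟨t, h⟩)⁻¹ = faceEl (upperFaceSet (vtxOf ⟨t, h⟩)) (g ⟨t, h⟩)⁻¹ := by
          unfold fg; rw [faceEl_inv]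
        rw [hinv]
        apply prepend_Sset Gf h (inv_mem (hgm _))
        apply conjA ⟨t, h⟩ (g ⟨t, h⟩)⁻¹ (inv_mem (hgm _))
        exact ihinv _ ⟨g, hgm, rfl⟩
    · exact Sset_closed_of_ge Gf (by omega)

end Sset
section Main
variable {G : Type*} [Group G] {n : ℕ} (Gf : ℕ → Subgroup G)

/-- `Sset Gf 0` as a subgroup. -/
def Ssub (hGf : IsFiltrationOfGroup Gf) : Subgroup ((Fin n → Bool) → G) where
  carrier := Sset Gf 0
  one_mem' := one_mem_Sset Gf 0
  mul_mem' := fun ha hb => (Sset_closed Gf hGf (2 ^ n) 0 (by omega)).1 _ _ ha hb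
  inv_mem' := fun ha => (Sset_closed Gf hGf (2 ^ n) 0 (by omega)).2 _ ha

lemma upperFace_isFace (v : Fin n → Bool) :
    IsFaceOfCodim (upperFaceSet v) (weight v) := by
  refine ⟨Finset.univ.filter (fun i => v i = true), fun _ => true, rfl, ?_⟩
  ext u
  simp [upperFaceSet]

lemma face_mem (hGf : IsFiltrationOfGroup Gf) : ∀ (k : ℕ) (I : Finset (Fin n)) (x : Fin n → Bool)
    (g : G), (I.filter fun i => x i = false).card = k → g ∈ Gf I.card →
    faceEl {v : Fin n → Bool | ∀ i ∈ I, v i = x i} g ∈ Sset Gf 0 := by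
  intro k
  induction k with
  | zero =>
    intro I x g hcard hg
    have hfil : (I.filter fun i => x i = false) = ∅ := Finset.card_eq_zero.mp hcard
    have hx : ∀ i ∈ I, x i = true := by
      intro i hi
      by_contra hxi
      have hxf : x i = false := by revert hxi; cases x i <;> simp
      have : i ∈ (I.filter fun i => x i = false) := Finset.mem_filter.mpr ⟨hi, hxf⟩
      rw [hfil] at this
      exact absurd this (Finset.notMem_empty i)
    have hset : {v : Fin n → Bool | ∀ i ∈ I, v i = x i} =
        upperFaceSet (fun i => decide (i ∈ I)) := by
      ext u
      simp only [Set.mem_setOf_eq, upperFaceSet, decide_eq_true_eq]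
      constructor
      · intro h i hi
        rw [h i hi, hx i hi]
      · intro h i hi
        rw [h i hi, hx i hi]
    have hw : weight (fun i => decide (i ∈ I)) = I.card := by
      unfold weight
      congr 1
      ext i
      simp
    rw [hset, ← vtxOf_idxOf (fun i => decide (i ∈ I))]
    exact single_mem_Sset Gf (Nat.zero_le _) (by rw [vtxOf_idxOf, hw]; exact hg)
  | succ k ih =>
    intro I x g hcard hg
    classical
    have hpos : 0 < (I.filter fun i => x i = false).card := by omega
    obtain ⟨i0, hi0⟩ := Finset.card_pos.mp hpos
    have hi0I : i0 ∈ I := (Finset.mem_filter.mp hi0).1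
    have hxi0 : x i0 = false := (Finset.mem_filter.mp hi0).2
    set x' : Fin n → Bool := Function.update x i0 true with hx'def
    have key : faceEl {v : Fin n → Bool | ∀ i ∈ I, v i = x i} g =
        faceEl {v : Fin n → Bool | ∀ i ∈ I.erase i0, v i = x i} g *
          (faceEl {v : Fin n → Bool | ∀ i ∈ I, v i = x' i} g)⁻¹ := by
      rw [eq_mul_inv_iff_mul_eq]
      funext v
      simp only [faceEl, Pi.mul_apply, Set.mem_setOf_eq]
      cases hb : v i0 with
      | false =>
        have hx'ne : ¬ (∀ i ∈ I, v i = x' i) := fun hc => by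
          have := hc i0 hi0I
          rw [hb, hx'def, Function.update_self] at this
          exact absurd this (by simp)
        have hiff : (∀ i ∈ I, v i = x i) ↔ (∀ i ∈ I.erase i0, v i = x i) := by
          constructor
          · intro hc i hi; exact hc i (Finset.mem_of_mem_erase hi)
          · intro hc i hi
            by_cases hii : i = i0
            · subst hii; rw [hb, hxi0]
            · exact hc i (Finset.mem_erase.mpr ⟨hii, hi⟩)
        rw [if_neg hx'ne, mul_one]
        by_cases hP : ∀ i ∈ I, v i = x i
        · rw [if_pos hP, if_pos (hiff.mp hP)]
        · rw [if_neg hP, if_neg (fun hc => hP (hiff.mpr hc))]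
      | true =>
        have hne : ¬ (∀ i ∈ I, v i = x i) := fun hc => by
          have := hc i0 hi0I
          rw [hb, hxi0] at this
          exact absurd this (by simp)
        have hiff : (∀ i ∈ I, v i = x' i) ↔ (∀ i ∈ I.erase i0, v i = x i) := by
          constructor
          · intro hc i hi
            have := hc i (Finset.mem_of_mem_erase hi)
            rwa [hx'def, Function.update_of_ne (Finset.ne_of_mem_erase hi)] at this
          · intro hc i hi
            by_cases hii : i = i0
            · subst hii; rw [hb, hx'def, Function.update_self]
            · rw [hx'def, Function.update_of_ne hii]
              exact hc i (Finset.mem_erase.mpr ⟨hii, hi⟩)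
        rw [if_neg hne, one_mul]
        by_cases hP : ∀ i ∈ I, v i = x' i
        · rw [if_pos hP, if_pos (hiff.mp hP)]
        · rw [if_neg hP, if_neg (fun hc => hP (hiff.mpr hc))]
    rw [key]
    have h1 : faceEl {v : Fin n → Bool | ∀ i ∈ I.erase i0, v i = x i} g ∈ Sset Gf 0 := by
      apply ih (I.erase i0) x g
      · rw [Finset.filter_erase, Finset.card_erase_of_mem hi0, hcard]
        omega
      · rw [Finset.card_erase_of_mem hi0I]
        exact Gf_anti Gf hGf (Nat.sub_le _ _) hg
    have h2 : faceEl {v : Fin n → Bool | ∀ i ∈ I, v i = x' i} g ∈ Sset Gf 0 := by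
      apply ih I x' g _ hg
      have : (I.filter fun i => x' i = false) = (I.filter fun i => x i = false).erase i0 := by
        ext i
        simp only [Finset.mem_filter, Finset.mem_erase]
        constructor
        · rintro ⟨hiI, hxf⟩
          have hii : i ≠ i0 := fun hc => by
            subst hc
            rw [hx'def, Function.update_self] at hxf
            exact absurd hxf (by simp)
          rw [hx'def, Function.update_of_ne hii] at hxf
          exact ⟨hii, hiI, hxf⟩
        · rintro ⟨hii, hiI, hxf⟩
          rw [hx'def]
          exact ⟨hiI, by rw [Function.update_of_ne hii]; exact hxf⟩
      rw [this, Finset.card_erase_of_mem hi0, hcard]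
      omega
    exact (Sset_closed Gf hGf (2 ^ n) 0 (by omega)).1 _ _ h1
      ((Sset_closed Gf hGf (2 ^ n) 0 (by omega)).2 _ h2)

lemma hk_le_Sset (hGf : IsFiltrationOfGroup Gf) : (hkCubes Gf n : Set ((Fin n → Bool) → G)) ⊆ Sset Gf 0 := by
  have : hkCubes Gf n ≤ Ssub Gf hGf := by
    rw [hkCubes, Subgroup.closure_le]
    rintro f ⟨c, F, g, ⟨I, x, hcard, rfl⟩, hgmem, rfl⟩
    exact face_mem Gf hGf _ I x g rfl (by rw [hcard]; exact hgmem)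
  exact this

lemma PP_mem_hk : ∀ (d t : ℕ), 2 ^ n ≤ t + d → ∀ g : Fin (2 ^ n) → G,
    (∀ j, g j ∈ Gf (weight (vtxOf j))) → PP t g ∈ hkCubes Gf n := by
  intro d
  induction d with
  | zero =>
    intro t ht g _
    rw [PP_nil (by omega)]
    exact one_mem _
  | succ d ih =>
    intro t ht g hgm
    by_cases h : t < 2 ^ n
    · rw [PP_cons h]
      refine mul_mem (Subgroup.subset_closure ?_) (ih (t + 1) (by omega) g hgm)
      exact ⟨weight (vtxOf ⟨t, h⟩), upperFaceSet (vtxOf ⟨t, h⟩), g ⟨t, h⟩,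
        upperFace_isFace _, hgm _, rfl⟩
    · rw [PP_nil (by omega)]
      exact one_mem _

lemma stmtprod (g : (Fin n → Bool) → G) :
    ((List.finRange (2 ^ n)).map fun j => faceEl (upperFaceSet (vtxOf j)) (g (vtxOf j))).prod =
      PP 0 (fun j => g (vtxOf j)) := by
  unfold PP
  rw [List.drop_zero]
  rfl

lemma PP_inj (h1 h2 : Fin (2 ^ n) → G) (heq : PP 0 h1 = PP 0 h2) : h1 = h2 := by
  have step : ∀ k, PP (n := n) k h1 = PP k h2 := by
    intro k
    induction k with
    | zero => exact heq
    | succ k ih =>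
      by_cases hk : k < 2 ^ n
      · have hval : h1 ⟨k, hk⟩ = h2 ⟨k, hk⟩ := by
          have := congrFun ih (vtxOf ⟨k, hk⟩)
          rwa [PP_apply_self hk, PP_apply_self hk] at this
        have e1 : fg h1 ⟨k, hk⟩ * PP (k + 1) h1 = fg h2 ⟨k, hk⟩ * PP (k + 1) h2 := by
          rw [← PP_cons hk, ← PP_cons hk]; exact ih
        have e2 : fg h1 ⟨k, hk⟩ = fg h2 ⟨k, hk⟩ := by unfold fg; rw [hval]
        rw [e2] at e1
        exact mul_left_cancel e1
      · rw [PP_nil (by omega), PP_nil (by omega)]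
  funext j
  have h := congrFun (step (j : ℕ)) (vtxOf ⟨(j : ℕ), j.2⟩)
  rw [PP_apply_self j.2, PP_apply_self j.2] at h
  exact h

end Main
theorem stmt3 {G : Type*} [Group G] (Gf : ℕ → Subgroup G) (hGf : IsFiltrationOfGroup Gf)
    {n : ℕ} (q : (Fin n → Bool) → G) :
    q ∈ hkCubes Gf n ↔
      ∃! g : (Fin n → Bool) → G,
        (∀ v : Fin n → Bool, g v ∈ Gf (weight v)) ∧
        q = ((List.finRange (2 ^ n)).map
              fun j => faceEl (upperFaceSet (vtxOf j)) (g (vtxOf j))).prod := by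
  constructor
  · intro hq
    obtain ⟨g, hgm, rfl⟩ := hk_le_Sset Gf hGf hq
    refine ⟨fun v => g (idxOf v), ⟨?_, ?_⟩, ?_⟩
    · intro v
      have := hgm (idxOf v)
      rwa [vtxOf_idxOf] at this
    · rw [stmtprod (fun v => g (idxOf v))]
      exact (congrArg (PP 0) (funext fun j : Fin (2 ^ n) =>
        show g (idxOf (vtxOf j)) = g j by rw [idxOf_vtxOf])).symm
    · rintro g' ⟨hg'm, hg'e⟩
      have h1 : PP 0 (fun j => g' (vtxOf j)) = PP 0 g := by rw [← stmtprod, ← hg'e]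
      have h2 := PP_inj _ _ h1
      funext v
      have h3 := congrFun h2 (idxOf v)
      rwa [vtxOf_idxOf] at h3
  · rintro ⟨g, ⟨hgm, hqe⟩, -⟩
    rw [hqe, stmtprod]
    exact PP_mem_hk Gf (2 ^ n) 0 (by omega) _ (fun j => hgm (vtxOf j))
end

section
/- Let (G, G_•) be a filtered group, q ∈ C^n(G_•), and φ: {0,1}^m → {0,1}^n a discrete-cube morphism. Then q ∘ φ ∈ C^m(G_•). -/
open Finset

/-- A (pre)filtration on a group: a decreasing chain of subgroups with
`[G_i, G_j] ⊆ G_{i+j}`. -/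
def IsHKFiltration {G : Type*} [Group G] (Gf : ℕ → Subgroup G) : Prop :=
  (∀ i, Gf (i + 1) ≤ Gf i) ∧
  (∀ i j : ℕ, ∀ x ∈ Gf i, ∀ y ∈ Gf j, x⁻¹ * y⁻¹ * x * y ∈ Gf (i + j))

lemma cubeEmb_eq_sum {m : ℕ} (v : Fin m → Bool) :
    cubeEmb v = ∑ j ∈ Finset.univ.filter (fun j => v j = true), Pi.single j (1:ℤ) := by
  funext i
  rw [Finset.sum_apply, Finset.sum_pi_single]
  simp [cubeEmb]

lemma cubeMorphism_coord {m n : ℕ} {φ : (Fin m → Bool) → (Fin n → Bool)}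
    (hφ : IsCubeMorphism φ) (i : Fin n) :
    (∃ c : Bool, ∀ v, φ v i = c) ∨ (∃ j, ∀ v, φ v i = v j) ∨ (∃ j, ∀ v, φ v i = !(v j)) := by
  obtain ⟨M, t, hM⟩ := hφ
  set a : Fin m → ℤ := fun j => M (Pi.single j 1) i with ha
  set b : ℤ := t i with hb
  -- value formula
  have key : ∀ v : Fin m → Bool,
      (if φ v i then (1:ℤ) else 0) = (∑ j ∈ Finset.univ.filter (fun j => v j = true), a j) + b := by
    intro v
    have h := congrFun (hM v) i
    have h1 : cubeEmb (φ v) i = (if φ v i then (1:ℤ) else 0) := rfl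
    have h2 : M (cubeEmb v) i = ∑ j ∈ Finset.univ.filter (fun j => v j = true), a j := by
      rw [cubeEmb_eq_sum, map_sum]
      rw [Finset.sum_apply]
    rw [h1] at h
    rw [Pi.add_apply, h2] at h
    exact h
  have hval : ∀ v : Fin m → Bool,
      (∑ j ∈ Finset.univ.filter (fun j => v j = true), a j) + b = 0 ∨
      (∑ j ∈ Finset.univ.filter (fun j => v j = true), a j) + b = 1 := by
    intro v
    rw [← key v]
    cases φ v i <;> simp
  -- evaluate at the all-false vertex
  have hfalse : ∀ j : Fin m, (((fun _ : Fin m => false) j) = true) = False := by simp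
  have h0 : b = 0 ∨ b = 1 := by
    have := hval (fun _ => false)
    simpa using this
  -- single-coordinate evaluation
  have hsingle : ∀ j : Fin m, a j + b = 0 ∨ a j + b = 1 := by
    intro j
    have := hval (fun k => decide (k = j))
    have hf : Finset.univ.filter (fun k : Fin m => (decide (k = j)) = true) = {j} := by
      ext k; simp
    rw [hf, Finset.sum_singleton] at this
    exact this
  by_cases hall : ∀ j, a j = 0
  · left
    rcases h0 with hb0 | hb1
    · refine ⟨false, fun v => ?_⟩
      have := key v
      rw [Finset.sum_eq_zero (fun j _ => hall j), hb0] at this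
      cases h : φ v i
      · rfl
      · rw [h] at this; simp at this
    · refine ⟨true, fun v => ?_⟩
      have := key v
      rw [Finset.sum_eq_zero (fun j _ => hall j), hb1] at this
      cases h : φ v i
      · rw [h] at this; simp at this
      · rfl
  · push_neg at hall
    obtain ⟨j0, hj0⟩ := hall
    have huniq : ∀ j, j ≠ j0 → a j = 0 := by
      intro j hj
      by_contra hja
      have hpair := hval (fun k => decide (k = j0 ∨ k = j))
      have hf : Finset.univ.filter (fun k : Fin m => (decide (k = j0 ∨ k = j)) = true)
          = {j0, j} := by ext k; simp [Finset.mem_insert]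
      rw [hf] at hpair
      rw [Finset.sum_pair (by exact fun h => hj (h.symm ▸ rfl))] at hpair
      have := hsingle j0
      have := hsingle j
      omega
    have hsum : ∀ v : Fin m → Bool,
        (∑ j ∈ Finset.univ.filter (fun j => v j = true), a j) = if v j0 then a j0 else 0 := by
      intro v
      have h1 : (∑ j ∈ Finset.univ.filter (fun j => v j = true), a j)
          = ∑ j ∈ Finset.univ.filter (fun j => v j = true), (if j = j0 then a j0 else 0) := by
        refine Finset.sum_congr rfl (fun j _ => ?_)
        by_cases h : j = j0
        · simp [h]
        · simp [h, huniq j h]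
      rw [h1, Finset.sum_ite_eq']
      simp
    have hkey2 : ∀ v : Fin m → Bool,
        (if φ v i then (1:ℤ) else 0) = (if v j0 then a j0 else 0) + b := by
      intro v; rw [key v, hsum v]
    have hc : (a j0 = 1 ∧ b = 0) ∨ (a j0 = -1 ∧ b = 1) := by
      have := hsingle j0
      omega
    rcases hc with ⟨ha1, hb1⟩ | ⟨ha1, hb1⟩
    · right; left
      refine ⟨j0, fun v => ?_⟩
      have := hkey2 v
      rw [ha1, hb1] at this
      cases h : v j0 <;> cases h2 : φ v i <;> rw [h, h2] at this <;> simp_all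
    · right; right
      refine ⟨j0, fun v => ?_⟩
      have := hkey2 v
      rw [ha1, hb1] at this
      cases h : v j0 <;> cases h2 : φ v i <;> rw [h, h2] at this <;> simp [h, h2] at this ⊢

lemma coordSet {m n : ℕ} {φ : (Fin m → Bool) → (Fin n → Bool)}
    (hφ : IsCubeMorphism φ) (i : Fin n) (xi : Bool) :
    ({v : Fin m → Bool | φ v i = xi} = ∅) ∨ ({v : Fin m → Bool | φ v i = xi} = Set.univ) ∨
    (∃ j b, {v : Fin m → Bool | φ v i = xi} = {v | v j = b}) := by
  rcases cubeMorphism_coord hφ i with ⟨c, hc⟩ | ⟨j, hj⟩ | ⟨j, hj⟩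
  · by_cases h : c = xi
    · right; left; ext v; simp [hc, h]
    · left; ext v; simp [hc, h]
  · right; right; exact ⟨j, xi, by ext v; simp [hj]⟩
  · right; right
    refine ⟨j, !xi, ?_⟩
    ext v
    simp only [Set.mem_setOf_eq, hj]
    cases v j <;> cases xi <;> simp

lemma face_inter_coord {m : ℕ} (F : Set (Fin m → Bool)) (c : ℕ) (hF : IsFaceOfCodim F c)
    (j : Fin m) (b : Bool) :
    ({v | v j = b} ∩ F = ∅) ∨ (∃ c' ≤ c + 1, IsFaceOfCodim ({v | v j = b} ∩ F) c') := by
  obtain ⟨I, x, hcard, hFeq⟩ := hF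
  by_cases hj : j ∈ I
  · by_cases hx : x j = b
    · right
      refine ⟨c, by omega, I, x, hcard, ?_⟩
      rw [hFeq]
      ext v
      simp only [Set.mem_inter_iff, Set.mem_setOf_eq]
      constructor
      · rintro ⟨_, h2⟩; exact h2
      · intro h; exact ⟨by rw [h j hj, hx], h⟩
    · left
      rw [hFeq]
      ext v
      simp only [Set.mem_inter_iff, Set.mem_setOf_eq, Set.mem_empty_iff_false, iff_false]
      rintro ⟨h1, h2⟩
      exact hx ((h2 j hj).symm.trans h1)
  · right
    refine ⟨c + 1, le_rfl, insert j I, Function.update x j b, ?_, ?_⟩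
    · rw [Finset.card_insert_of_notMem hj, hcard]
    · rw [hFeq]
      ext v
      simp only [Set.mem_inter_iff, Set.mem_setOf_eq]
      constructor
      · rintro ⟨h1, h2⟩ i hi
        rcases Finset.mem_insert.mp hi with rfl | hi'
        · rw [Function.update_self]; exact h1
        · rw [Function.update_of_ne (fun h => hj (by rw [← h]; exact hi')) ]
          exact h2 i hi'
      · intro h
        refine ⟨?_, fun i hi => ?_⟩
        · have := h j (Finset.mem_insert_self j I)
          rwa [Function.update_self] at this
        · have := h i (Finset.mem_insert_of_mem hi)
          rwa [Function.update_of_ne (fun hh => hj (by rw [← hh]; exact hi))] at this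

lemma preimage_face {m n : ℕ} {φ : (Fin m → Bool) → (Fin n → Bool)}
    (hφ : IsCubeMorphism φ) (I : Finset (Fin n)) (x : Fin n → Bool) :
    ({v : Fin m → Bool | ∀ i ∈ I, φ v i = x i} = ∅) ∨
    (∃ c' ≤ I.card, IsFaceOfCodim {v : Fin m → Bool | ∀ i ∈ I, φ v i = x i} c') := by
  induction I using Finset.induction_on with
  | empty =>
      right
      refine ⟨0, le_rfl, ∅, (fun _ => false), rfl, ?_⟩
      ext v; simp
  | @insert i I hi ih =>
      have hsplit : {v : Fin m → Bool | ∀ k ∈ insert i I, φ v k = x k}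
          = {v : Fin m → Bool | φ v i = x i} ∩ {v : Fin m → Bool | ∀ k ∈ I, φ v k = x k} := by
        ext v
        simp only [Set.mem_inter_iff, Set.mem_setOf_eq, Finset.mem_insert]
        constructor
        · intro h; exact ⟨h i (Or.inl rfl), fun k hk => h k (Or.inr hk)⟩
        · rintro ⟨h1, h2⟩ k hk
          rcases hk with rfl | hk
          · exact h1
          · exact h2 k hk
      rcases ih with hemp | ⟨c', hc', hface⟩
      · left
        rw [hsplit, hemp, Set.inter_empty]
      · rcases coordSet hφ i (x i) with h0 | huniv | ⟨j, b, hjb⟩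
        · left; rw [hsplit, h0, Set.empty_inter]
        · right
          refine ⟨c', le_trans hc' ?_, ?_⟩
          · rw [Finset.card_insert_of_notMem hi]; omega
          · rw [hsplit, huniv, Set.univ_inter]; exact hface
        · rw [hsplit, hjb]
          rcases face_inter_coord _ c' hface j b with hemp | ⟨c'', hc'', hface'⟩
          · left; exact hemp
          · right
            refine ⟨c'', ?_, hface'⟩
            rw [Finset.card_insert_of_notMem hi]
            omega

theorem stmt5 {G : Type*} [Group G] (Gf : ℕ → Subgroup G) (hGf : IsHKFiltration Gf)
    {m n : ℕ} (q : (Fin n → Bool) → G) (hq : q ∈ hkCubes Gf n)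
    (φ : (Fin m → Bool) → (Fin n → Bool)) (hφ : IsCubeMorphism φ) :
    (q ∘ φ) ∈ hkCubes Gf m :=  by
  have hmono : ∀ {c' c : ℕ}, c' ≤ c → Gf c ≤ Gf c' :=
    fun {c' c} h => antitone_nat_of_succ_le hGf.1 h
  have hgen : ∀ f ∈ { f | ∃ (c : ℕ) (F : Set (Fin n → Bool)) (g : G),
      IsFaceOfCodim F c ∧ g ∈ Gf c ∧ f = faceEl F g }, (f ∘ φ) ∈ hkCubes Gf m := by
    rintro f ⟨c, F, g, ⟨I, x, hcard, hFeq⟩, hg, rfl⟩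
    have hcomp : faceEl F g ∘ φ = faceEl (φ ⁻¹' F) g := by
      funext v
      simp only [Function.comp_apply, faceEl]
      by_cases h : φ v ∈ F
      · rw [if_pos h, if_pos (Set.mem_preimage.mpr h)]
      · rw [if_neg h, if_neg (fun hh => h (Set.mem_preimage.mp hh))]
    have hpre : φ ⁻¹' F = {v : Fin m → Bool | ∀ i ∈ I, φ v i = x i} := by
      rw [hFeq]; rfl
    rw [hcomp, hpre]
    rcases preimage_face hφ I x with hemp | ⟨c', hc', hface⟩
    · rw [hemp]
      have : faceEl (∅ : Set (Fin m → Bool)) g = 1 := by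
        funext v; simp [faceEl]
      rw [this]
      exact one_mem _
    · exact Subgroup.subset_closure
        ⟨c', _, g, hface, hmono (hcard ▸ hc') hg, rfl⟩
  refine Subgroup.closure_induction (p := fun f _ => (f ∘ φ) ∈ hkCubes Gf m)
    (fun f hf => hgen f hf) (by simpa using one_mem (hkCubes Gf m)) ?_ ?_ hq
  · intro a b _ _ ha hb
    have : (a * b) ∘ φ = (a ∘ φ) * (b ∘ φ) := rfl
    rw [this]; exact mul_mem ha hb
  · intro a _ ha
    have : a⁻¹ ∘ φ = (a ∘ φ)⁻¹ := rfl
    rw [this]; exact inv_mem ha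
end

section
/- For any filtered groups (G, G_•) and (H, H_•), the set Poly(H_•, G_•) of polynomial maps H → G adapted to the filtrations is a group under pointwise multiplication (the Lazard–Leibman theorem). -/
open Finset

/-- A (pre)filtration on a group: a decreasing chain of subgroups with
`[G_i, G_j] ⊆ G_{i+j}`. -/
def IsGroupFiltration {G : Type*} [Group G] (Gf : ℕ → Subgroup G) : Prop :=
  (∀ i, Gf (i + 1) ≤ Gf i) ∧
  (∀ i j : ℕ, ∀ x ∈ Gf i, ∀ y ∈ Gf j, x⁻¹ * y⁻¹ * x * y ∈ Gf (i + j))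

set_option linter.unusedSectionVars false
section LL

variable {H G : Type*} [Group H] [Group G]

/-- Formal group-expressions whose leaves are maps `H → G` with a declared degree. -/
inductive PExpr (H G : Type*) : Type _ where
  | one : PExpr H G
  | atom : (H → G) → ℕ → PExpr H G
  | mul : PExpr H G → PExpr H G → PExpr H G
  | inv : PExpr H G → PExpr H G
  | comm : PExpr H G → PExpr H G → PExpr H G

namespace PExpr

def val : PExpr H G → H → G
  | .one => fun _ => 1
  | .atom f _ => f
  | .mul u v => fun x => u.val x * v.val x
  | .inv u => fun x => (u.val x)⁻¹
  | .comm u v => fun x => (u.val x)⁻¹ * (v.val x)⁻¹ * u.val x * v.val x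

def DegGe : PExpr H G → ℕ → Prop
  | .one, _ => True
  | .atom _ a, D => D ≤ a
  | .mul u v, D => u.DegGe D ∧ v.DegGe D
  | .inv u, D => u.DegGe D
  | .comm u v, D => ∃ d₁ d₂, u.DegGe d₁ ∧ v.DegGe d₂ ∧ D ≤ d₁ + d₂

/-- list-form polynomiality, shifted by `a`. -/
def PolyL (Hf : ℕ → Subgroup H) (Gf : ℕ → Subgroup G) (a : ℕ) (f : H → G) : Prop :=
  ∀ L : List (ℕ × H), (∀ p ∈ L, p.2 ∈ Hf p.1) → ∀ x,
    ((L.map Prod.snd).foldr mulDiff f) x ∈ Gf (a + (L.map Prod.fst).sum)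

def AtomsPoly (Hf : ℕ → Subgroup H) (Gf : ℕ → Subgroup G) : PExpr H G → Prop
  | .one => True
  | .atom f a => PolyL Hf Gf a f
  | .mul u v => AtomsPoly Hf Gf u ∧ AtomsPoly Hf Gf v
  | .inv u => AtomsPoly Hf Gf u
  | .comm u v => AtomsPoly Hf Gf u ∧ AtomsPoly Hf Gf v

/-- formal conjugate `x^g = g⁻¹ x g`, written as `x * [x, g]`. -/
def conjE (x g : PExpr H G) : PExpr H G := .mul x (.comm x g)

/-- formal derivative along `h` of weight `e`. -/
def dh (h : H) (e : ℕ) : PExpr H G → PExpr H G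
  | .one => .one
  | .atom f a => .atom (mulDiff h f) (a + e)
  | .mul u v => .mul (.mul (dh h e u) (.comm (dh h e u) v)) (dh h e v)
  | .inv u => conjE (.inv (dh h e u)) (.inv u)
  | .comm u v =>
      .mul (.mul (.mul
        (conjE (conjE (.comm u (dh h e v)) (dh h e u)) (.comm u v))
        (.comm (.comm u v) (.mul (dh h e v) (dh h e u))))
        (.comm (dh h e u) (dh h e v)))
        (conjE (.comm (dh h e u) v) (dh h e v))

theorem val_dh (h : H) (e : ℕ) : ∀ E : PExpr H G, (dh h e E).val = mulDiff h E.val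
  | .one => by funext x; simp [dh, val, mulDiff]
  | .atom f a => by funext x; simp [dh, val, mulDiff]
  | .mul u v => by
      funext x
      have hu := congrFun (val_dh h e u) x
      have hv := congrFun (val_dh h e v) x
      simp only [dh, val, mulDiff] at hu hv ⊢
      rw [hu, hv]; group
  | .inv u => by
      funext x
      have hu := congrFun (val_dh h e u) x
      simp only [dh, conjE, val, mulDiff] at hu ⊢
      rw [hu]; group
  | .comm u v => by
      funext x
      have hu := congrFun (val_dh h e u) x
      have hv := congrFun (val_dh h e v) x
      simp only [dh, conjE, val, mulDiff] at hu hv ⊢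
      rw [hu, hv]; group

theorem degGe_zero : ∀ E : PExpr H G, E.DegGe 0
  | .one => trivial
  | .atom f a => Nat.zero_le a
  | .mul u v => ⟨degGe_zero u, degGe_zero v⟩
  | .inv u => degGe_zero u
  | .comm u v => ⟨0, 0, degGe_zero u, degGe_zero v, le_refl 0⟩

theorem degGe_mono : ∀ (E : PExpr H G) {D D' : ℕ}, D' ≤ D → E.DegGe D → E.DegGe D'
  | .one, _, _, _, _ => trivial
  | .atom f a, _, _, hD, hE => le_trans hD hE
  | .mul u v, _, _, hD, hE => ⟨degGe_mono u hD hE.1, degGe_mono v hD hE.2⟩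
  | .inv u, _, _, hD, hE => degGe_mono u hD hE
  | .comm u v, _, _, hD, ⟨d₁, d₂, h₁, h₂, hle⟩ => ⟨d₁, d₂, h₁, h₂, le_trans hD hle⟩

theorem degGe_dh (h : H) (e : ℕ) :
    ∀ (E : PExpr H G) {D : ℕ}, E.DegGe D → (PExpr.dh h e E).DegGe (D + e)
  | .one, _, _ => trivial
  | .atom f a, D, hE => by simpa [PExpr.dh, DegGe] using Nat.add_le_add hE (le_refl e)
  | .mul u v, D, hE => by
      have hu := degGe_dh h e u hE.1
      have hv := degGe_dh h e v hE.2
      exact ⟨⟨hu, D + e, 0, hu, degGe_zero v, by omega⟩, hv⟩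
  | .inv u, D, hE => by
      have hu := degGe_dh h e u hE
      exact ⟨hu, D + e, 0, hu, degGe_zero (.inv u), by omega⟩
  | .comm u v, D, ⟨d₁, d₂, h₁, h₂, hle⟩ => by
      have hu := degGe_dh h e u h₁
      have hv := degGe_dh h e v h₂
      have hT : (D + e) ≤ d₁ + d₂ + e := by omega
      refine ⟨⟨⟨?_, ?_⟩, ?_⟩, ?_⟩
      · have hbase : DegGe (PExpr.comm u (PExpr.dh h e v)) (D + e) :=
          ⟨d₁, d₂ + e, h₁, hv, by omega⟩
        have h2 : DegGe (conjE (PExpr.comm u (PExpr.dh h e v)) (PExpr.dh h e u)) (D + e) :=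
          ⟨hbase, D + e, 0, hbase, degGe_zero _, by omega⟩
        exact ⟨h2, D + e, 0, h2, degGe_zero _, by omega⟩
      · exact ⟨d₁ + d₂, e, ⟨d₁, d₂, h₁, h₂, le_refl _⟩,
          ⟨degGe_mono _ (by omega) hv, degGe_mono _ (by omega) hu⟩, hT⟩
      · exact ⟨d₁ + e, d₂ + e, hu, hv, by omega⟩
      · have hbase : DegGe (PExpr.comm (PExpr.dh h e u) v) (D + e) :=
          ⟨d₁ + e, d₂, hu, h₂, by omega⟩
        exact ⟨hbase, D + e, 0, hbase, degGe_zero _, by omega⟩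

theorem PolyL.mulDiff {Hf : ℕ → Subgroup H} {Gf : ℕ → Subgroup G} {a : ℕ} {f : H → G}
    (hf : PolyL Hf Gf a f) {h : H} {e : ℕ} (hh : h ∈ Hf e) :
    PolyL Hf Gf (a + e) (mulDiff h f) := by
  intro L hL x
  have key : ((L.map Prod.snd).foldr _root_.mulDiff (_root_.mulDiff h f)) x
      = (((L ++ [(e, h)]).map Prod.snd).foldr _root_.mulDiff f) x := by
    rw [List.map_append, List.foldr_append]
    rfl
  rw [key]
  have hmem : ∀ p ∈ L ++ [(e, h)], p.2 ∈ Hf p.1 := by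
    intro p hp
    rcases List.mem_append.1 hp with hp | hp
    · exact hL p hp
    · simp only [List.mem_singleton] at hp; subst hp; exact hh
  have := hf (L ++ [(e, h)]) hmem x
  have hsum : a + ((L ++ [(e, h)]).map Prod.fst).sum = a + e + (L.map Prod.fst).sum := by
    simp; omega
  rwa [hsum] at this

theorem atomsPoly_dh {Hf : ℕ → Subgroup H} {Gf : ℕ → Subgroup G} {h : H} {e : ℕ}
    (hh : h ∈ Hf e) : ∀ (E : PExpr H G), AtomsPoly Hf Gf E →
      AtomsPoly Hf Gf (PExpr.dh h e E)
  | .one, _ => trivial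
  | .atom f a, hE => PolyL.mulDiff hE hh
  | .mul u v, hE => by
      have hu := atomsPoly_dh hh u hE.1
      have hv := atomsPoly_dh hh v hE.2
      exact ⟨⟨hu, hu, hE.2⟩, hv⟩
  | .inv u, hE => by
      have hu := atomsPoly_dh hh u hE
      exact ⟨hu, hu, hE⟩
  | .comm u v, hE => by
      have hu := atomsPoly_dh hh u hE.1
      have hv := atomsPoly_dh hh v hE.2
      refine ⟨⟨⟨⟨⟨⟨hE.1, hv⟩, ⟨hE.1, hv⟩, hu⟩, ⟨⟨hE.1, hv⟩, ⟨hE.1, hv⟩, hu⟩,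
        hE.1, hE.2⟩, ⟨hE.1, hE.2⟩, hv, hu⟩, hu, hv⟩, ⟨hu, hE.2⟩, ⟨hu, hE.2⟩, hv⟩

variable {Hf : ℕ → Subgroup H} {Gf : ℕ → Subgroup G}

theorem val_mem (hGf : IsGroupFiltration Gf) (hmono : Antitone Gf) :
    ∀ (E : PExpr H G) {D : ℕ}, AtomsPoly Hf Gf E → E.DegGe D → ∀ x, E.val x ∈ Gf D
  | .one, D, _, _, x => one_mem _
  | .atom f a, D, hA, hD, x => by
      have := hA [] (by simp) x
      simp only [List.map_nil, List.foldr_nil, List.sum_nil, Nat.add_zero] at this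
      exact hmono hD this
  | .mul u v, D, hA, hD, x =>
      mul_mem (val_mem hGf hmono u hA.1 hD.1 x) (val_mem hGf hmono v hA.2 hD.2 x)
  | .inv u, D, hA, hD, x => inv_mem (val_mem hGf hmono u hA hD x)
  | .comm u v, D, hA, ⟨d₁, d₂, h₁, h₂, hle⟩, x =>
      hmono hle (hGf.2 d₁ d₂ _ (val_mem hGf hmono u hA.1 h₁ x) _ (val_mem hGf hmono v hA.2 h₂ x))

theorem main (hGf : IsGroupFiltration Gf) (hmono : Antitone Gf) :
    ∀ (L : List (ℕ × H)) {E : PExpr H G} {D : ℕ}, AtomsPoly Hf Gf E → E.DegGe D →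
      (∀ p ∈ L, p.2 ∈ Hf p.1) → ∀ x,
      ((L.map Prod.snd).foldr mulDiff E.val) x ∈ Gf (D + (L.map Prod.fst).sum) := by
  intro L
  induction L using List.reverseRecOn with
  | nil => intro E D hA hD _ x; simpa using val_mem hGf hmono _ hA hD x
  | append_singleton L p ih =>
    intro E D hA hD hmem x
    have hp : p.2 ∈ Hf p.1 := hmem p (by simp)
    have key : (((L ++ [p]).map Prod.snd).foldr mulDiff E.val) x
        = ((L.map Prod.snd).foldr mulDiff (PExpr.dh p.2 p.1 E).val) x := by
      rw [List.map_append, List.foldr_append, val_dh]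
      rfl
    rw [key]
    have := ih (atomsPoly_dh hp _ hA) (degGe_dh p.2 p.1 _ hD) (fun q hq => hmem q (by simp [hq])) x
    have hsum : D + p.1 + (L.map Prod.fst).sum = D + ((L ++ [p]).map Prod.fst).sum := by
      simp; omega
    rwa [hsum] at this


theorem polyL_of_isPolyMap {f : H → G}
    (hf : ∀ (n : ℕ) (d : Fin n → ℕ) (h : Fin n → H), (∀ j, h j ∈ Hf (d j)) →
      ∀ x : H, ((List.ofFn h).foldr mulDiff f) x ∈ Gf (∑ j, d j)) :
    PolyL Hf Gf 0 f := by
  intro L hL x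
  have h1 : L.map Prod.snd = List.ofFn (fun j => (L.get j).2) := by
    conv_lhs => rw [← List.ofFn_get L]
    rw [List.map_ofFn]; rfl
  have h2 : (L.map Prod.fst).sum = ∑ j, (L.get j).1 := by
    conv_lhs => rw [← List.ofFn_get L]
    rw [List.map_ofFn, List.sum_ofFn]; rfl
  rw [h1, Nat.zero_add, h2]
  exact hf L.length (fun j => (L.get j).1) (fun j => (L.get j).2)
    (fun j => hL _ (L.get_mem j)) x

theorem isPolyMap_of_polyL {f : H → G} (hf : PolyL Hf Gf 0 f) :
    ∀ (n : ℕ) (d : Fin n → ℕ) (h : Fin n → H), (∀ j, h j ∈ Hf (d j)) →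
      ∀ x : H, ((List.ofFn h).foldr mulDiff f) x ∈ Gf (∑ j, d j) := by
  intro n d h hm x
  have := hf (List.ofFn (fun j => (d j, h j))) ?_ x
  · rw [List.map_ofFn, List.map_ofFn, List.sum_ofFn, Nat.zero_add] at this
    exact this
  · intro p hp
    rw [List.mem_ofFn] at hp
    obtain ⟨j, rfl⟩ := hp
    exact hm j

end PExpr

end LL

theorem stmt8 {H G : Type*} [Group H] [Group G] (Hf : ℕ → Subgroup H)
    (Gf : ℕ → Subgroup G) (hHf : IsGroupFiltration Hf) (hGf : IsGroupFiltration Gf) :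
    IsPolyMap Hf Gf (fun _ => (1 : G)) ∧
    (∀ f g : H → G, IsPolyMap Hf Gf f → IsPolyMap Hf Gf g →
      IsPolyMap Hf Gf (fun x => f x * g x)) ∧
    (∀ f : H → G, IsPolyMap Hf Gf f → IsPolyMap Hf Gf (fun x => (f x)⁻¹)) := by
  have hmono : Antitone Gf := antitone_nat_of_succ_le hGf.1
  refine ⟨?_, ?_, ?_⟩
  · exact PExpr.isPolyMap_of_polyL (fun L hL x =>
      PExpr.main hGf hmono L (E := .one) trivial trivial hL x)
  · intro f g hf hg
    exact PExpr.isPolyMap_of_polyL (fun L hL x =>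
      PExpr.main hGf hmono L (E := .mul (.atom f 0) (.atom g 0))
        ⟨PExpr.polyL_of_isPolyMap hf, PExpr.polyL_of_isPolyMap hg⟩
        ⟨le_refl 0, le_refl 0⟩ hL x)
  · intro f hf
    exact PExpr.isPolyMap_of_polyL (fun L hL x =>
      PExpr.main hGf hmono L (E := .inv (.atom f 0))
        (PExpr.polyL_of_isPolyMap hf) (le_refl 0) hL x)
end

section
/- Let (G, G_•) be a filtered group. A map q: {0,1}^n → G lies in C^n(G_•) if and only if q extends to a polynomial map g ∈ Poly(Z^n, G_•), where Z^n carries the filtration Z^n = (Z^n)_0 = (Z^n)_1, (Z^n)_2 = {0}. -/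
open Finset

/-- A (pre)filtration on a group: a decreasing chain of subgroups with
`[G_i, G_j] ⊆ G_{i+j}`. -/
def IsGpFiltration {G : Type*} [Group G] (Gf : ℕ → Subgroup G) : Prop :=
  (∀ i, Gf (i + 1) ≤ Gf i) ∧
  (∀ i j : ℕ, ∀ x ∈ Gf i, ∀ y ∈ Gf j, x⁻¹ * y⁻¹ * x * y ∈ Gf (i + j))

/-- The lower central series filtration on `ℤ^n`:
`(ℤ^n)_0 = (ℤ^n)_1 = ℤ^n`, `(ℤ^n)_2 = {0}`. -/
def zFilt (n : ℕ) : ℕ → Subgroup (Multiplicative (Fin n → ℤ)) :=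
  fun i => if i ≤ 1 then ⊤ else ⊥

namespace Stmt9


variable {H G : Type*} [Group H] [Group G]

def iterDiff (l : List H) (g : H → G) : H → G := l.foldr mulDiff g

@[simp] lemma iterDiff_nil (g : H → G) : iterDiff [] g = g := rfl

@[simp] lemma iterDiff_cons (h : H) (l : List H) (g : H → G) :
    iterDiff (h :: l) g = mulDiff h (iterDiff l g) := rfl

lemma iterDiff_append (l₁ l₂ : List H) (g : H → G) :
    iterDiff (l₁ ++ l₂) g = iterDiff l₁ (iterDiff l₂ g) := List.foldr_append

lemma iterDiff_concat (l : List H) (h : H) (g : H → G) :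
    iterDiff (l ++ [h]) g = iterDiff l (mulDiff h g) := iterDiff_append _ _ _

variable (Gf : ℕ → Subgroup G)

/-- truncated polynomiality class -/
def PT (i m : ℕ) (u : H → G) : Prop :=
  ∀ l : List H, l.length ≤ m → ∀ x, iterDiff l u x ∈ Gf (l.length + i)

def PF (i : ℕ) (u : H → G) : Prop :=
  ∀ l : List H, ∀ x, iterDiff l u x ∈ Gf (l.length + i)

lemma PF_iff_PT (i : ℕ) (u : H → G) : PF Gf i u ↔ ∀ m, PT Gf i m u := by
  constructor
  · intro h m l _ x; exact h l x
  · intro h l x; exact h l.length l le_rfl x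

variable {Gf}

lemma gf_antitone (hGf : IsGpFiltration Gf) : ∀ {a b : ℕ}, a ≤ b → Gf b ≤ Gf a := by
  intro a b hab
  induction b with
  | zero => simpa [Nat.le_zero.mp hab] using le_rfl
  | succ k ih =>
    rcases Nat.eq_or_lt_of_le hab with rfl | hlt
    · exact le_rfl
    · exact le_trans (hGf.1 k) (ih (Nat.lt_succ_iff.mp hlt))

lemma PT.mono_i (hGf : IsGpFiltration Gf) {i j m : ℕ} {u : H → G} (hij : j ≤ i)
    (h : PT Gf i m u) : PT Gf j m u := by
  intro l hl x
  exact gf_antitone hGf (by omega) (h l hl x)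

lemma PT.mono_m {i m m' : ℕ} {u : H → G} (hm : m' ≤ m) (h : PT Gf i m u) : PT Gf i m' u :=
  fun l hl x => h l (le_trans hl hm) x

lemma PT.value {i m : ℕ} {u : H → G} (h : PT Gf i m u) (x : H) : u x ∈ Gf i := by
  simpa using h [] (by simp) x

lemma PT.deriv {i m : ℕ} {u : H → G} (h : PT Gf i (m + 1) u) (d : H) :
    PT Gf (i + 1) m (mulDiff d u) := by
  intro l hl x
  have := h (l ++ [d]) (by simp; omega) x
  rw [iterDiff_concat] at this
  have e : (l ++ [d]).length + i = l.length + (i + 1) := by simp; omega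
  rwa [e] at this

lemma PT.congr {i m : ℕ} {u v : H → G} (h : PT Gf i m u) (e : v = u) : PT Gf i m v := e ▸ h

/-- Leibman-type closure lemmas, by induction on the truncation order. -/
lemma leibman (hGf : IsGpFiltration Gf) : ∀ m : ℕ,
    (∀ i j : ℕ, ∀ u v : H → G, PT Gf i m u → PT Gf j m v → PT Gf (min i j) m (u * v)) ∧
    (∀ i : ℕ, ∀ u : H → G, PT Gf i m u → PT Gf i m u⁻¹) ∧
    (∀ i j : ℕ, ∀ u v : H → G, PT Gf i m u → PT Gf j m v →
      PT Gf (i + j) m (fun x => (u x)⁻¹ * (v x)⁻¹ * u x * v x)) := by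
  intro m
  induction m with
  | zero =>
    refine ⟨?_, ?_, ?_⟩
    · intro i j u v hu hv l hl x
      have : l = [] := List.length_eq_zero_iff.mp (by omega)
      subst this
      simp only [iterDiff_nil, List.length_nil, Nat.zero_add, Pi.mul_apply]
      exact mul_mem (gf_antitone hGf (min_le_left i j) (hu.value x))
        (gf_antitone hGf (min_le_right i j) (hv.value x))
    · intro i u hu l hl x
      have : l = [] := List.length_eq_zero_iff.mp (by omega)
      subst this
      simpa using inv_mem (hu.value x)
    · intro i j u v hu hv l hl x
      have : l = [] := List.length_eq_zero_iff.mp (by omega)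
      subst this
      simpa using hGf.2 i j _ (hu.value x) _ (hv.value x)
  | succ m IH =>
    obtain ⟨Pmul, Pinv, Pcomm⟩ := IH
    -- conjugation helper at level m
    have Pconj : ∀ (k : ℕ) (A g : H → G), PT Gf k m A → PT Gf 0 m g →
        PT Gf k m (fun x => (g x)⁻¹ * A x * g x) := by
      intro k A g hA hg
      have h1 : PT Gf (k + 0) m (fun x => (A x)⁻¹ * (g x)⁻¹ * A x * g x) := Pcomm k 0 A g hA hg
      have h2 := Pmul k (k + 0) A _ hA h1
      refine (h2.mono_i hGf (by omega)).congr ?_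
      funext x; simp only [Pi.mul_apply]; group
    refine ⟨?_, ?_, ?_⟩
    · -- multiplication
      intro i j u v hu hv l hl x
      rcases List.eq_nil_or_concat l with rfl | ⟨l', d, rfl⟩
      · simp only [iterDiff_nil, List.length_nil, Nat.zero_add, Pi.mul_apply]
        exact mul_mem (gf_antitone hGf (min_le_left i j) (hu.value x))
          (gf_antitone hGf (min_le_right i j) (hv.value x))
      · rw [List.concat_eq_append, iterDiff_concat]
        have hdu := hu.deriv d
        have hdv := hv.deriv d
        have hcm : PT Gf (i + 1 + j) m
            (fun x => (mulDiff d u x)⁻¹ * (v x)⁻¹ * mulDiff d u x * v x) :=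
          Pcomm (i + 1) j _ v hdu (hv.mono_m (by omega))
        have hprod := Pmul (i + 1)
          (min (i + 1 + j) (j + 1)) (mulDiff d u) _ hdu
          (Pmul (i + 1 + j) (j + 1) _ (mulDiff d v) hcm hdv)
        have hprod' : PT Gf (min i j + 1) m
            (mulDiff d u * ((fun x => (mulDiff d u x)⁻¹ * (v x)⁻¹ * mulDiff d u x * v x) *
              mulDiff d v)) := hprod.mono_i hGf (by omega)
        have heq : mulDiff d (u * v) =
            mulDiff d u * ((fun x => (mulDiff d u x)⁻¹ * (v x)⁻¹ * mulDiff d u x * v x) *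
              mulDiff d v) := by
          funext y; simp only [Pi.mul_apply, mulDiff]; group
        rw [heq]
        have hlen : l'.length ≤ m := by simp at hl; omega
        have := hprod' l' hlen x
        have e : l'.length + (min i j + 1) = (l' ++ [d]).length + min i j := by simp; omega
        rwa [e] at this
    · -- inversion
      intro i u hu l hl x
      rcases List.eq_nil_or_concat l with rfl | ⟨l', d, rfl⟩
      · simpa using inv_mem (hu.value x)
      · rw [List.concat_eq_append, iterDiff_concat]
        have hdu := hu.deriv d
        have hdui : PT Gf (i + 1) m (mulDiff d u)⁻¹ := Pinv _ _ hdu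
        have huinv : PT Gf i m u⁻¹ := Pinv _ _ (hu.mono_m (by omega))
        have hcm : PT Gf (i + 1 + i) m
            (fun x => ((mulDiff d u)⁻¹ x)⁻¹ * (u⁻¹ x)⁻¹ * (mulDiff d u)⁻¹ x * u⁻¹ x) :=
          Pcomm (i + 1) i _ _ hdui huinv
        have hprod := Pmul (i + 1) (i + 1 + i) _ _ hdui hcm
        have hprod' : PT Gf (i + 1) m ((mulDiff d u)⁻¹ *
            fun x => ((mulDiff d u)⁻¹ x)⁻¹ * (u⁻¹ x)⁻¹ * (mulDiff d u)⁻¹ x * u⁻¹ x) :=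
          hprod.mono_i hGf (by omega)
        have heq : mulDiff d u⁻¹ = (mulDiff d u)⁻¹ *
            fun x => ((mulDiff d u)⁻¹ x)⁻¹ * (u⁻¹ x)⁻¹ * (mulDiff d u)⁻¹ x * u⁻¹ x := by
          funext y; simp only [Pi.mul_apply, Pi.inv_apply, mulDiff]; group
        rw [heq]
        have hlen : l'.length ≤ m := by simp at hl; omega
        have := hprod' l' hlen x
        have e : l'.length + (i + 1) = (l' ++ [d]).length + i := by simp; omega
        rwa [e] at this
    · -- commutator
      intro i j u v hu hv l hl x
      rcases List.eq_nil_or_concat l with rfl | ⟨l', d, rfl⟩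
      · simpa using hGf.2 i j _ (hu.value x) _ (hv.value x)
      · rw [List.concat_eq_append, iterDiff_concat]
        set du := mulDiff d u with hdu_def
        set dv := mulDiff d v with hdv_def
        have hum : PT Gf i m u := hu.mono_m (by omega)
        have hvm : PT Gf j m v := hv.mono_m (by omega)
        have hdu : PT Gf (i + 1) m du := hu.deriv d
        have hdv : PT Gf (j + 1) m dv := hv.deriv d
        -- pieces
        have hX0 : PT Gf (i + (j + 1)) m (fun x => (u x)⁻¹ * (dv x)⁻¹ * u x * dv x) :=
          Pcomm i (j + 1) u dv hum hdv
        have hX1 : PT Gf (i + (j + 1)) m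
            (fun x => (du x)⁻¹ * ((u x)⁻¹ * (dv x)⁻¹ * u x * dv x) * du x) :=
          Pconj _ _ du hX0 (hdu.mono_i hGf (by omega))
        have hcuv : PT Gf (i + j) m (fun x => (u x)⁻¹ * (v x)⁻¹ * u x * v x) :=
          Pcomm i j u v hum hvm
        have hX2 : PT Gf (i + (j + 1)) m
            (fun x => ((u x)⁻¹ * (v x)⁻¹ * u x * v x)⁻¹ *
              ((du x)⁻¹ * ((u x)⁻¹ * (dv x)⁻¹ * u x * dv x) * du x) *
              ((u x)⁻¹ * (v x)⁻¹ * u x * v x)) :=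
          Pconj _ _ _ hX1 (hcuv.mono_i hGf (by omega))
        have hdvdu : PT Gf 1 m (dv * du) :=
          (Pmul (j + 1) (i + 1) dv du hdv hdu).mono_i hGf (by omega)
        have hY : PT Gf (i + j + 1) m
            (fun x => ((u x)⁻¹ * (v x)⁻¹ * u x * v x)⁻¹ * ((dv * du) x)⁻¹ *
              ((u x)⁻¹ * (v x)⁻¹ * u x * v x) * (dv * du) x) :=
          Pcomm (i + j) 1 _ _ hcuv hdvdu
        have hZ : PT Gf (i + 1 + (j + 1)) m (fun x => (du x)⁻¹ * (dv x)⁻¹ * du x * dv x) :=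
          Pcomm (i + 1) (j + 1) du dv hdu hdv
        have hW0 : PT Gf (i + 1 + j) m (fun x => (du x)⁻¹ * (v x)⁻¹ * du x * v x) :=
          Pcomm (i + 1) j du v hdu hvm
        have hW : PT Gf (i + 1 + j) m
            (fun x => (dv x)⁻¹ * ((du x)⁻¹ * (v x)⁻¹ * du x * v x) * dv x) :=
          Pconj _ _ dv hW0 (hdv.mono_i hGf (by omega))
        -- assemble product
        have hZW := Pmul _ _ _ _ hZ hW
        have hYZW := Pmul _ _ _ _ hY hZW
        have hXYZW := Pmul _ _ _ _ hX2 hYZW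
        have hfinal : PT Gf (i + j + 1) m _ := hXYZW.mono_i hGf (by omega)
        have heq : mulDiff d (fun x => (u x)⁻¹ * (v x)⁻¹ * u x * v x) =
            ((fun x => ((u x)⁻¹ * (v x)⁻¹ * u x * v x)⁻¹ *
              ((du x)⁻¹ * ((u x)⁻¹ * (dv x)⁻¹ * u x * dv x) * du x) *
              ((u x)⁻¹ * (v x)⁻¹ * u x * v x)) *
            ((fun x => ((u x)⁻¹ * (v x)⁻¹ * u x * v x)⁻¹ * ((dv * du) x)⁻¹ *
              ((u x)⁻¹ * (v x)⁻¹ * u x * v x) * (dv * du) x) *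
            ((fun x => (du x)⁻¹ * (dv x)⁻¹ * du x * dv x) *
            (fun x => (dv x)⁻¹ * ((du x)⁻¹ * (v x)⁻¹ * du x * v x) * dv x)))) := by
          funext y
          simp only [Pi.mul_apply, mulDiff, hdu_def, hdv_def]
          group
        rw [heq]
        have hlen : l'.length ≤ m := by simp at hl; omega
        have := hfinal l' hlen x
        have e : l'.length + (i + j + 1) = (l' ++ [d]).length + (i + j) := by simp; omega
        rwa [e] at this

lemma PF.mul (hGf : IsGpFiltration Gf) {u v : H → G} (hu : PF Gf 0 u) (hv : PF Gf 0 v) :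
    PF Gf 0 (u * v) := by
  rw [PF_iff_PT] at *
  intro m
  simpa using (leibman hGf m).1 0 0 u v (hu m) (hv m)

lemma PF.inv (hGf : IsGpFiltration Gf) {u : H → G} (hu : PF Gf 0 u) : PF Gf 0 u⁻¹ := by
  rw [PF_iff_PT] at *
  intro m
  exact (leibman hGf m).2.1 0 u (hu m)

lemma PF.one (hGf : IsGpFiltration Gf) : PF Gf 0 (1 : H → G) := by
  have key : ∀ l : List H, iterDiff l (1 : H → G) = 1 := by
    intro l
    induction l with
    | nil => rfl
    | cons h t ih => rw [iterDiff_cons, ih]; funext x; simp [mulDiff]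
  intro l x
  rw [key]
  exact one_mem _



variable {A : Type*} [AddCommGroup A]

def addDiff (h : A) (P : A → ℤ) : A → ℤ := fun x => P (x + h) - P x

def addIter (l : List A) (P : A → ℤ) : A → ℤ := l.foldr addDiff P

@[simp] lemma addIter_nil (P : A → ℤ) : addIter [] P = P := rfl
@[simp] lemma addIter_cons (h : A) (l : List A) (P : A → ℤ) :
    addIter (h :: l) P = addDiff h (addIter l P) := rfl

lemma addIter_append (l₁ l₂ : List A) (P : A → ℤ) :
    addIter (l₁ ++ l₂) P = addIter l₁ (addIter l₂ P) := List.foldr_append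

@[simp] lemma addDiff_zero (h : A) : addDiff h (0 : A → ℤ) = 0 := by
  funext x; simp [addDiff]

@[simp] lemma addIter_zero (l : List A) : addIter l (0 : A → ℤ) = 0 := by
  induction l with
  | nil => rfl
  | cons h t ih => rw [addIter_cons, ih, addDiff_zero]

lemma addIter_add (l : List A) (P Q : A → ℤ) :
    addIter l (P + Q) = addIter l P + addIter l Q := by
  induction l with
  | nil => rfl
  | cons h t ih =>
    rw [addIter_cons, ih]
    funext x; simp [addDiff]; ring

def DegLE (k : ℕ) (P : A → ℤ) : Prop := ∀ l : List A, k < l.length → addIter l P = 0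

lemma DegLE.mono {k k' : ℕ} {P : A → ℤ} (h : DegLE k P) (hk : k ≤ k') : DegLE k' P :=
  fun l hl => h l (by omega)

lemma DegLE.zero_fn (k : ℕ) : DegLE k (0 : A → ℤ) := fun l _ => addIter_zero l

lemma DegLE.const (c : ℤ) : DegLE 0 (fun _ => c : A → ℤ) := by
  intro l hl
  rcases List.eq_nil_or_concat l with rfl | ⟨l', d, rfl⟩
  · simp at hl
  · rw [List.concat_eq_append, addIter_append]
    have : addIter [d] (fun _ => c : A → ℤ) = 0 := by
      funext x; simp [addIter, addDiff]
    rw [this, addIter_zero]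

lemma DegLE.add {k : ℕ} {P Q : A → ℤ} (hP : DegLE k P) (hQ : DegLE k Q) : DegLE k (P + Q) := by
  intro l hl
  rw [addIter_add, hP l hl, hQ l hl, add_zero]

lemma DegLE.shift {k : ℕ} {P : A → ℤ} (hP : DegLE k P) (a : A) :
    DegLE k (fun x => P (x + a)) := by
  have key : ∀ l : List A, addIter l (fun x => P (x + a)) = fun x => addIter l P (x + a) := by
    intro l
    induction l with
    | nil => rfl
    | cons h t ih =>
      rw [addIter_cons, ih]
      funext x
      simp only [addDiff, addIter_cons]
      rw [add_right_comm]
  intro l hl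
  rw [key, hP l hl]
  rfl

lemma DegLE.diff {k : ℕ} {P : A → ℤ} (hP : DegLE (k + 1) P) (h : A) :
    DegLE k (addDiff h P) := by
  intro l hl
  have : addIter l (addDiff h P) = addIter (l ++ [h]) P := by
    rw [addIter_append]; rfl
  rw [this]
  exact hP _ (by simp; omega)

lemma DegLE.diff_eq_zero {P : A → ℤ} (hP : DegLE 0 P) (h : A) : addDiff h P = 0 := by
  have := hP [h] (by simp)
  simpa using this

lemma DegLE.shift_eq {P : A → ℤ} (hP : DegLE 0 P) (d x : A) : P (x + d) = P x := by
  have := congrFun (hP.diff_eq_zero d) x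
  simp only [addDiff, Pi.zero_apply] at this
  omega

lemma DegLE.mul_zero {P Q : A → ℤ} (hP : DegLE 0 P) (hQ : DegLE 0 Q) :
    DegLE 0 (fun x => P x * Q x) := by
  intro l hl
  rcases List.eq_nil_or_concat l with rfl | ⟨l', d, rfl⟩
  · simp at hl
  · rw [List.concat_eq_append, addIter_append]
    have : addIter [d] (fun x => P x * Q x) = 0 := by
      funext x
      show P (x + d) * Q (x + d) - P x * Q x = 0
      rw [hP.shift_eq d x, hQ.shift_eq d x]; ring
    rw [this, addIter_zero]

lemma DegLE.mul_aux : ∀ (c a b : ℕ) (P Q : A → ℤ), a + b ≤ c → DegLE a P → DegLE b Q →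
    DegLE (a + b) (fun x => P x * Q x) := by
  intro c
  induction c with
  | zero =>
    intro a b P Q hab hP hQ
    have ha : a = 0 := by omega
    have hb : b = 0 := by omega
    subst ha; subst hb
    exact hP.mul_zero hQ
  | succ c IH =>
    intro a b P Q hab hP hQ
    rcases Nat.eq_zero_or_pos (a + b) with hab0 | habpos
    · have ha : a = 0 := by omega
      have hb : b = 0 := by omega
      subst ha; subst hb
      exact hP.mul_zero hQ
    intro l hl
    rcases List.eq_nil_or_concat l with rfl | ⟨l', d, rfl⟩
    · simp at hl
    · rw [List.concat_eq_append, addIter_append]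
      have key : addIter [d] (fun x => P x * Q x) =
          (fun x => P (x + d) * addDiff d Q x) + fun x => addDiff d P x * Q x := by
        funext x
        show P (x + d) * Q (x + d) - P x * Q x = _
        simp only [addDiff, Pi.add_apply]
        ring
      rw [key]
      have hR1 : DegLE (a + b - 1) (fun x => P (x + d) * addDiff d Q x) := by
        rcases Nat.eq_zero_or_pos b with hb | hb
        · subst hb
          have h0 : addDiff d Q = 0 := hQ.diff_eq_zero d
          have : (fun x => P (x + d) * addDiff d Q x) = (0 : A → ℤ) := by
            funext x; rw [h0]; simp
          rw [this]
          exact DegLE.zero_fn _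
        · obtain ⟨b', rfl⟩ : ∃ b', b = b' + 1 := ⟨b - 1, by omega⟩
          have h1 : DegLE a (fun x => P (x + d)) := hP.shift d
          have h2 : DegLE b' (addDiff d Q) := hQ.diff d
          exact (IH a b' _ _ (by omega) h1 h2).mono (by omega)
      have hR2 : DegLE (a + b - 1) (fun x => addDiff d P x * Q x) := by
        rcases Nat.eq_zero_or_pos a with ha | ha
        · subst ha
          have h0 : addDiff d P = 0 := hP.diff_eq_zero d
          have : (fun x => addDiff d P x * Q x) = (0 : A → ℤ) := by
            funext x; rw [h0]; simp
          rw [this]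
          exact DegLE.zero_fn _
        · obtain ⟨a', rfl⟩ : ∃ a', a = a' + 1 := ⟨a - 1, by omega⟩
          have h1 : DegLE a' (addDiff d P) := hP.diff d
          exact (IH a' b _ _ (by omega) h1 hQ).mono (by omega)
      have hsum := hR1.add hR2
      apply hsum
      simp at hl ⊢
      omega

lemma DegLE.mul {a b : ℕ} {P Q : A → ℤ} (hP : DegLE a P) (hQ : DegLE b Q) :
    DegLE (a + b) (fun x => P x * Q x) :=
  DegLE.mul_aux (a + b) a b P Q le_rfl hP hQ

/-- functions with constant differences have degree ≤ 1 -/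
lemma DegLE.of_const_diff {P : A → ℤ} (h : ∀ d : A, ∃ c : ℤ, addDiff d P = fun _ => c) :
    DegLE 1 P := by
  intro l hl
  rcases List.eq_nil_or_concat l with rfl | ⟨l', d, rfl⟩
  · simp at hl
  · rw [List.concat_eq_append, addIter_append]
    obtain ⟨c, hc⟩ := h d
    show addIter l' (addDiff d P) = 0
    rw [hc]
    exact DegLE.const c l' (by simp at hl; omega)

lemma DegLE.finset_prod {ι : Type*} (I : Finset ι) (ℓ : ι → A → ℤ)
    (hℓ : ∀ i ∈ I, DegLE 1 (ℓ i)) :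
    DegLE I.card (fun x => ∏ i ∈ I, ℓ i x) := by
  classical
  induction I using Finset.induction with
  | empty =>
    simpa using DegLE.const 1
  | @insert a s ha ih =>
    have h1 : DegLE 1 (ℓ a) := hℓ a (Finset.mem_insert_self a s)
    have h2 : DegLE s.card (fun x => ∏ i ∈ s, ℓ i x) :=
      ih (fun i hi => hℓ i (Finset.mem_insert_of_mem hi))
    have := h1.mul h2
    have e : (fun x => ℓ a x * ∏ i ∈ s, ℓ i x) = fun x => ∏ i ∈ insert a s, ℓ i x := by
      funext x
      rw [Finset.prod_insert ha]
    rw [e] at this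
    have ecard : 1 + s.card = (insert a s).card := by
      rw [Finset.card_insert_of_notMem ha]; omega
    rwa [ecard] at this


lemma iterDiff_of_one_mem (g : H → G) :
    ∀ (l : List H), (1 : H) ∈ l → ∀ x, iterDiff l g x = 1 := by
  intro l
  induction l with
  | nil => intro h; simp at h
  | cons h t ih =>
    intro hmem x
    rcases List.mem_cons.mp hmem with he | ht
    · subst he
      simp [mulDiff]
    · show mulDiff h (iterDiff t g) x = 1
      rw [mulDiff]
      rw [ih ht x, ih ht (x * h)]
      simp

lemma isPolyMap_iff {n : ℕ} {Gf : ℕ → Subgroup G} (hGf : IsGpFiltration Gf)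
    (g : Multiplicative (Fin n → ℤ) → G) :
    IsPolyMap (zFilt n) Gf g ↔ PF Gf 0 g := by
  constructor
  · intro hg l x
    have h1 : ∀ j : Fin l.length, l.get j ∈ zFilt n ((fun _ => 1) j) := by
      intro j; simp [zFilt]
    have := hg l.length (fun _ => 1) l.get h1 x
    rw [List.ofFn_get] at this
    simpa [iterDiff] using this
  · intro hg m d h hmem x
    by_cases hd : ∀ j, d j ≤ 1
    · have hsum : ∑ j, d j ≤ m := by
        calc ∑ j, d j ≤ ∑ _j : Fin m, 1 := Finset.sum_le_sum (fun j _ => hd j)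
          _ = m := by simp
      have h2 := hg (List.ofFn h) x
      rw [List.length_ofFn, Nat.add_zero] at h2
      exact gf_antitone hGf hsum h2
    · push_neg at hd; obtain ⟨j, hj⟩ := hd
      have hj1 : h j = 1 := by
        have := hmem j
        rw [zFilt, if_neg (by omega)] at this
        simpa using this
      have hmem1 : (1 : Multiplicative (Fin n → ℤ)) ∈ List.ofFn h := by
        rw [← hj1]
        exact List.mem_ofFn.mpr ⟨j, rfl⟩
      have := iterDiff_of_one_mem g (List.ofFn h) hmem1 x
      rw [show ((List.ofFn h).foldr mulDiff g) = iterDiff (List.ofFn h) g from rfl, this]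
      exact one_mem _

lemma iterDiff_eq_of_vanish (g : H → G) :
    ∀ (l : List H) (x : H), (∀ l' : List H, l'.Sublist l → l' ≠ l → g (x * l'.prod) = 1) →
      iterDiff l g x = g (x * l.prod) := by
  intro l
  induction l with
  | nil => intro x _; simp
  | cons h t ih =>
    intro x hyp
    have h1 : iterDiff t g x = g (x * t.prod) := by
      refine ih x (fun l' hs hne => hyp l' (hs.cons h) ?_)
      intro e; subst e
      have := hs.length_le
      simp at this
    have h2 : g (x * t.prod) = 1 := by
      refine hyp t (List.sublist_cons_self h t) ?_
      intro e
      have := congrArg List.length e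
      simp at this
    have h3 : iterDiff t g (x * h) = g (x * h * t.prod) := by
      refine ih (x * h) (fun l' hs hne => ?_)
      have := hyp (h :: l') (hs.cons₂ h) (by simpa using hne)
      rwa [List.prod_cons, ← mul_assoc] at this
    show mulDiff h (iterDiff t g) x = _
    rw [mulDiff, h1, h2, h3, List.prod_cons, ← mul_assoc]
    simp

-- Multiplicative products
lemma prod_map_ofAdd {A : Type*} [AddCommMonoid A] (l : List A) :
    (l.map (Multiplicative.ofAdd : A → Multiplicative A)).prod = Multiplicative.ofAdd l.sum := by
  induction l with
  | nil => rfl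
  | cons h t ih =>
    rw [List.map_cons, List.prod_cons, List.sum_cons, ih, ofAdd_add]

-- cube helpers
def sv {n : ℕ} (S : Finset (Fin n)) : Fin n → Bool := fun i => decide (i ∈ S)

lemma cubeEmb_sv {n : ℕ} (S : Finset (Fin n)) :
    cubeEmb (sv S) = ∑ i ∈ S, Pi.single i (1 : ℤ) := by
  funext j
  rw [Finset.sum_apply]
  simp only [Pi.single_apply]
  rw [Finset.sum_ite_eq S j (fun _ => (1 : ℤ))]
  by_cases hj : j ∈ S <;> simp [cubeEmb, sv, hj]

lemma sv_supp {n : ℕ} (v : Fin n → Bool) :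
    sv (Finset.univ.filter fun i => v i = true) = v := by
  funext i
  simp [sv]

lemma weight_sv {n : ℕ} (S : Finset (Fin n)) : weight (sv S) = S.card := by
  unfold weight
  congr 1
  ext i
  simp [sv]


section Elem
variable {A : Type*} [AddCommGroup A] {G : Type*} [Group G]

lemma iterDiff_zpow (c : G) (P : A → ℤ) :
    ∀ l : List (Multiplicative A),
      iterDiff l (fun x : Multiplicative A => c ^ P x.toAdd) =
        fun x => c ^ (addIter (l.map Multiplicative.toAdd) P x.toAdd) := by
  intro l
  induction l with
  | nil => rfl
  | cons h t ih =>
    rw [iterDiff_cons, ih]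
    funext x
    simp only [mulDiff, List.map_cons, addIter_cons, addDiff]
    rw [← zpow_neg, ← zpow_add]
    congr 1
    rw [show (x * h).toAdd = x.toAdd + h.toAdd from rfl]
    ring

lemma elemPoly {Gf : ℕ → Subgroup G} (hGf : IsGpFiltration Gf) {k : ℕ} {c : G} (hc : c ∈ Gf k)
    {P : A → ℤ} (hP : DegLE k P) :
    PF Gf 0 (fun x : Multiplicative A => c ^ P x.toAdd) := by
  intro l x
  rw [iterDiff_zpow]
  by_cases hl : l.length ≤ k
  · exact gf_antitone hGf (by omega) (zpow_mem hc _)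
  · have h0 : addIter (l.map Multiplicative.toAdd) P = 0 := hP _ (by simp; omega)
    rw [h0]
    simpa using one_mem _

lemma PF.list_prod {H : Type*} [Group H] {Gf : ℕ → Subgroup G} (hGf : IsGpFiltration Gf)
    (L : List (H → G)) (h : ∀ f ∈ L, PF Gf 0 f) : PF Gf 0 L.prod := by
  induction L with
  | nil => exact PF.one hGf
  | cons f t ih =>
    rw [List.prod_cons]
    exact (h f (List.mem_cons_self)).mul hGf (ih (fun f' hf' => h f' (List.mem_cons_of_mem f hf')))

lemma list_prod_eq_of_unique {α M : Type*} [Monoid M] :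
    ∀ (L : List α) (f : α → M) (a : α), L.Nodup → a ∈ L →
      (∀ b ∈ L, b ≠ a → f b = 1) → (L.map f).prod = f a := by
  intro L
  induction L with
  | nil => intro f a _ ha; simp at ha
  | cons b t ih =>
    intro f a hnd ha hothers
    rcases List.mem_cons.mp ha with rfl | hat
    · have hone : ∀ x ∈ t.map f, x = 1 := by
        intro x hx
        obtain ⟨y, hy, rfl⟩ := List.mem_map.mp hx
        refine hothers y (List.mem_cons_of_mem _ hy) ?_
        rintro rfl
        exact (List.nodup_cons.mp hnd).1 hy
      rw [List.map_cons, List.prod_cons, List.prod_eq_one hone, mul_one]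
    · have hb1 : f b = 1 := by
        refine hothers b (List.mem_cons_self) ?_
        rintro rfl
        exact (List.nodup_cons.mp hnd).1 hat
      rw [List.map_cons, List.prod_cons, hb1, one_mul]
      exact ih f a (List.nodup_cons.mp hnd).2 hat
        (fun b' hb' hb'a => hothers b' (List.mem_cons_of_mem _ hb') hb'a)

lemma list_prod_apply {α β : Type*} [Monoid β] (x : α) :
    ∀ L : List (α → β), L.prod x = (L.map (fun f => f x)).prod := by
  intro L
  induction L with
  | nil => rfl
  | cons f t ih =>
    rw [List.prod_cons, List.map_cons, List.prod_cons, Pi.mul_apply, ih]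

end Elem

section Main
variable {G : Type*} [Group G] {n : ℕ}

/-- generators extend to polynomials -/
lemma gen_ext {Gf : ℕ → Subgroup G} (hGf : IsGpFiltration Gf)
    {f : (Fin n → Bool) → G}
    (hf : ∃ (c : ℕ) (F : Set (Fin n → Bool)) (g : G),
      IsFaceOfCodim F c ∧ g ∈ Gf c ∧ f = faceEl F g) :
    ∃ g : Multiplicative (Fin n → ℤ) → G, PF Gf 0 g ∧
      ∀ v : Fin n → Bool, f v = g (Multiplicative.ofAdd (cubeEmb v)) := by
  classical
  obtain ⟨c, F, a, ⟨I, xv, hcard, hF⟩, ha, rfl⟩ := hf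
  refine ⟨fun x => a ^ (∏ i ∈ I, (if xv i then x.toAdd i else 1 - x.toAdd i)), ?_, ?_⟩
  · have hdeg : DegLE I.card
        (fun t : Fin n → ℤ => ∏ i ∈ I, (if xv i then t i else 1 - t i)) := by
      apply DegLE.finset_prod
      intro i _
      apply DegLE.of_const_diff
      intro d
      by_cases hx : xv i
      · refine ⟨d i, ?_⟩
        funext y
        simp [addDiff, hx]
      · refine ⟨-d i, ?_⟩
        funext y
        simp [addDiff, hx]
    exact elemPoly hGf (k := I.card) (by rw [hcard]; exact ha) hdeg
  · intro v
    rw [faceEl, hF]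
    simp only [toAdd_ofAdd, Set.mem_setOf_eq]
    by_cases hv : ∀ i ∈ I, v i = xv i
    · rw [if_pos hv]
      have hprod : (∏ i ∈ I, (if xv i then cubeEmb v i else 1 - cubeEmb v i)) = 1 := by
        apply Finset.prod_eq_one
        intro i hi
        have := hv i hi
        cases hxv : xv i <;> simp [cubeEmb, hxv, this ▸ hxv] <;> simp_all [cubeEmb]
      rw [hprod, zpow_one]
    · rw [if_neg hv]
      push_neg at hv
      obtain ⟨i0, hi0, hne⟩ := hv
      have hprod : (∏ i ∈ I, (if xv i then cubeEmb v i else 1 - cubeEmb v i)) = 0 := by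
        apply Finset.prod_eq_zero hi0
        cases hxv : xv i0 <;> cases hv0 : v i0 <;> simp_all [cubeEmb]
      rw [hprod, zpow_zero]

/-- forward direction -/
lemma forward {Gf : ℕ → Subgroup G} (hGf : IsGpFiltration Gf)
    {q : (Fin n → Bool) → G} (hq : q ∈ hkCubes Gf n) :
    ∃ g : Multiplicative (Fin n → ℤ) → G, PF Gf 0 g ∧
      ∀ v : Fin n → Bool, q v = g (Multiplicative.ofAdd (cubeEmb v)) := by
  refine Subgroup.closure_induction
    (p := fun q _ => ∃ g : Multiplicative (Fin n → ℤ) → G, PF Gf 0 g ∧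
      ∀ v : Fin n → Bool, q v = g (Multiplicative.ofAdd (cubeEmb v)))
    ?_ ?_ ?_ ?_ hq
  · intro x hx
    exact gen_ext hGf hx
  · exact ⟨1, PF.one hGf, fun v => rfl⟩
  · rintro x y _ _ ⟨g1, hg1, hv1⟩ ⟨g2, hg2, hv2⟩
    exact ⟨g1 * g2, hg1.mul hGf hg2, fun v => by
      simp only [Pi.mul_apply, hv1 v, hv2 v]⟩
  · rintro x _ ⟨g1, hg1, hv1⟩
    exact ⟨g1⁻¹, hg1.inv hGf, fun v => by simp only [Pi.inv_apply, hv1 v]⟩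

/-- backward direction, by peeling off coefficients weight by weight -/
lemma backward_aux {Gf : ℕ → Subgroup G} (hGf : IsGpFiltration Gf) :
    ∀ d w : ℕ, w + d = n + 1 → ∀ g : Multiplicative (Fin n → ℤ) → G,
      PF Gf 0 g → (∀ v : Fin n → Bool, weight v < w → g (Multiplicative.ofAdd (cubeEmb v)) = 1) →
      (fun v : Fin n → Bool => g (Multiplicative.ofAdd (cubeEmb v))) ∈ hkCubes Gf n := by
  classical
  intro d
  induction d with
  | zero =>
    intro w hw g _ hvan
    have hone : (fun v : Fin n → Bool => g (Multiplicative.ofAdd (cubeEmb v)))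
        = (1 : (Fin n → Bool) → G) := by
      funext v
      have hwt : weight v < w := by
        have h1 : weight v ≤ n := by
          unfold weight
          exact le_trans (Finset.card_filter_le _ _) (by simp)
        omega
      simpa using hvan v hwt
    rw [hone]
    exact one_mem _
  | succ d IH =>
    intro w hw g hpoly hvan
    set cS : Finset (Fin n) → G :=
      fun S => g (Multiplicative.ofAdd (cubeEmb (sv S))) with hcS
    have hcS_mem : ∀ S : Finset (Fin n), S.card = w → cS S ∈ Gf w := by
      intro S hScard
      set l : List (Multiplicative (Fin n → ℤ)) :=
        S.toList.map (fun i => Multiplicative.ofAdd (Pi.single i (1 : ℤ))) with hl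
      have hlen : l.length = w := by
        rw [hl, List.length_map, Finset.length_toList, hScard]
      have hprod : l.prod = Multiplicative.ofAdd (cubeEmb (sv S)) := by
        rw [hl, show (S.toList.map fun i => Multiplicative.ofAdd (Pi.single i (1 : ℤ)))
            = (S.toList.map fun i => (Pi.single i (1 : ℤ))).map Multiplicative.ofAdd
          from List.map_map.symm]
        rw [prod_map_ofAdd]
        congr 1
        rw [cubeEmb_sv, ← List.sum_toFinset _ (Finset.nodup_toList S),
          Finset.toList_toFinset]
      have hvansub : ∀ l' : List (Multiplicative (Fin n → ℤ)),
          l'.Sublist l → l' ≠ l → g (1 * l'.prod) = 1 := by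
        intro l' hs hne
        rw [hl] at hs
        obtain ⟨s, hssub, rfl⟩ := List.sublist_map_iff.mp hs
        have hsnodup : s.Nodup := (Finset.nodup_toList S).sublist hssub
        have hslen : s.length < S.card := by
          have hle := hssub.length_le
          rcases Nat.lt_or_ge s.length S.toList.length with h1 | h1
          · rwa [Finset.length_toList] at h1
          · exfalso
            apply hne
            rw [hl]
            congr 1
            exact hssub.eq_of_length (by omega)
        have hprod' : (s.map fun i => Multiplicative.ofAdd (Pi.single i (1 : ℤ))).prod
            = Multiplicative.ofAdd (cubeEmb (sv s.toFinset)) := by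
          rw [show (s.map fun i => Multiplicative.ofAdd (Pi.single i (1 : ℤ)))
              = (s.map fun i => (Pi.single i (1 : ℤ))).map Multiplicative.ofAdd
            from List.map_map.symm]
          rw [prod_map_ofAdd]
          congr 1
          rw [cubeEmb_sv, ← List.sum_toFinset _ hsnodup]
        rw [one_mul, hprod']
        apply hvan
        rw [weight_sv, List.toFinset_card_of_nodup hsnodup]
        omega
      have hmem := hpoly l 1
      rw [show iterDiff l g 1 = g (1 * l.prod) from
        iterDiff_eq_of_vanish g l 1 hvansub, one_mul, hprod, hlen, Nat.add_zero] at hmem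
      exact hmem
    set fE : Finset (Fin n) → Multiplicative (Fin n → ℤ) → G :=
      fun S x => cS S ^ (∏ i ∈ S, x.toAdd i) with hfE
    have hfE_poly : ∀ S : Finset (Fin n), S.card = w → PF Gf 0 (fE S) := by
      intro S hS
      have hdeg : DegLE w (fun t : Fin n → ℤ => ∏ i ∈ S, t i) := by
        have h1 := DegLE.finset_prod S (fun i => fun t : Fin n → ℤ => t i)
          (fun i _ => DegLE.of_const_diff (fun dd =>
            ⟨dd i, by funext y; simp only [addDiff, Pi.add_apply]; ring⟩))
        rwa [hS] at h1
      exact elemPoly hGf (k := w) (hcS_mem S hS) hdeg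
    have hfE_cube : ∀ (S : Finset (Fin n)) (v : Fin n → Bool),
        fE S (Multiplicative.ofAdd (cubeEmb v)) =
          if S ⊆ Finset.univ.filter (fun i => v i = true) then cS S else 1 := by
      intro S v
      by_cases hsub : S ⊆ Finset.univ.filter (fun i => v i = true)
      · rw [if_pos hsub]
        have hone : (∏ i ∈ S, (Multiplicative.ofAdd (cubeEmb v)).toAdd i) = 1 := by
          apply Finset.prod_eq_one
          intro i hi
          have hvi : v i = true := by
            have := hsub hi
            simp only [Finset.mem_filter] at this
            exact this.2
          simp [cubeEmb, hvi]
        rw [hfE]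
        simp only []
        rw [hone, zpow_one]
      · rw [if_neg hsub]
        rw [Finset.not_subset] at hsub
        obtain ⟨i0, hi0, hni0⟩ := hsub
        have hvi : v i0 = false := by
          simp only [Finset.mem_filter, Finset.mem_univ, true_and] at hni0
          simpa using hni0
        have hzero : (∏ i ∈ S, (Multiplicative.ofAdd (cubeEmb v)).toAdd i) = 0 := by
          apply Finset.prod_eq_zero hi0
          simp [cubeEmb, hvi]
        rw [hfE]
        simp only []
        rw [hzero, zpow_zero]
    set Lw : List (Finset (Fin n)) :=
      ((Finset.univ : Finset (Finset (Fin n))).filter (fun S => S.card = w)).toList with hLw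
    have hLw_mem : ∀ S ∈ Lw, S.card = w := by
      intro S hS
      rw [hLw, Finset.mem_toList, Finset.mem_filter] at hS
      exact hS.2
    set r : Multiplicative (Fin n → ℤ) → G := (Lw.map (fun S => (fE S)⁻¹)).prod with hr
    have hr_poly : PF Gf 0 r := by
      refine PF.list_prod hGf _ ?_
      intro f hf
      obtain ⟨S, hS, rfl⟩ := List.mem_map.mp hf
      exact (hfE_poly S (hLw_mem S hS)).inv hGf
    have hr_cube : ∀ v : Fin n → Bool, r (Multiplicative.ofAdd (cubeEmb v)) =
        (Lw.map (fun S => (fE S (Multiplicative.ofAdd (cubeEmb v)))⁻¹)).prod := by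
      intro v
      rw [hr, list_prod_apply, List.map_map]
      rfl
    have hlow : ∀ v : Fin n → Bool, weight v < w →
        r (Multiplicative.ofAdd (cubeEmb v)) = 1 := by
      intro v hv
      rw [hr_cube]
      apply List.prod_eq_one
      intro x hx
      obtain ⟨S, hS, rfl⟩ := List.mem_map.mp hx
      have hScard := hLw_mem S hS
      have hnsub : ¬ S ⊆ Finset.univ.filter (fun i => v i = true) := by
        intro hsub
        have := Finset.card_le_card hsub
        unfold weight at hv
        omega
      show (fE S (Multiplicative.ofAdd (cubeEmb v)))⁻¹ = 1
      rw [hfE_cube S v, if_neg hnsub]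
      simp
    have heqw : ∀ v : Fin n → Bool, weight v = w →
        r (Multiplicative.ofAdd (cubeEmb v)) =
          (cS (Finset.univ.filter (fun i => v i = true)))⁻¹ := by
      intro v hv
      rw [hr_cube]
      have := list_prod_eq_of_unique Lw
        (fun S => (fE S (Multiplicative.ofAdd (cubeEmb v)))⁻¹)
        (Finset.univ.filter (fun i => v i = true))
        (Finset.nodup_toList _) ?_ ?_
      · rw [this]
        show (fE (Finset.univ.filter (fun i => v i = true))
          (Multiplicative.ofAdd (cubeEmb v)))⁻¹ = _
        rw [hfE_cube, if_pos (Finset.Subset.refl _)]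
      · rw [hLw, Finset.mem_toList, Finset.mem_filter]
        exact ⟨Finset.mem_univ _, hv⟩
      · intro S hS hne
        have hScard := hLw_mem S hS
        have hnsub : ¬ S ⊆ Finset.univ.filter (fun i => v i = true) := by
          intro hsub
          apply hne
          apply Finset.eq_of_subset_of_card_le hsub
          unfold weight at hv
          omega
        show (fE S (Multiplicative.ofAdd (cubeEmb v)))⁻¹ = 1
        rw [hfE_cube S v, if_neg hnsub]
        simp
    have hvan' : ∀ v : Fin n → Bool, weight v < w + 1 →
        (g * r) (Multiplicative.ofAdd (cubeEmb v)) = 1 := by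
      intro v hv
      rcases Nat.lt_or_ge (weight v) w with hlt | hge
      · rw [Pi.mul_apply, hvan v hlt, hlow v hlt, one_mul]
      · have hveq : weight v = w := by omega
        rw [Pi.mul_apply, heqw v hveq]
        have hgv : g (Multiplicative.ofAdd (cubeEmb v)) =
            cS (Finset.univ.filter (fun i => v i = true)) := by
          rw [hcS]
          simp only []
          rw [sv_supp]
        rw [hgv, mul_inv_cancel]
    have hQ' := IH (w + 1) (by omega) (g * r) (hpoly.mul hGf hr_poly) hvan'
    have hsplit : (fun v : Fin n → Bool => g (Multiplicative.ofAdd (cubeEmb v))) =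
        (fun v : Fin n → Bool => (g * r) (Multiplicative.ofAdd (cubeEmb v))) *
          (fun v : Fin n → Bool => r (Multiplicative.ofAdd (cubeEmb v)))⁻¹ := by
      funext v
      simp only [Pi.mul_apply, Pi.inv_apply]
      group
    rw [hsplit]
    refine mul_mem hQ' (inv_mem ?_)
    have hrep : (fun v : Fin n → Bool => r (Multiplicative.ofAdd (cubeEmb v))) =
        (Lw.map (fun S => (fun v : Fin n → Bool =>
          (fE S (Multiplicative.ofAdd (cubeEmb v)))⁻¹))).prod := by
      funext v
      rw [hr_cube, list_prod_apply, List.map_map]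
      rfl
    rw [hrep]
    apply list_prod_mem
    intro f hf
    obtain ⟨S, hS, rfl⟩ := List.mem_map.mp hf
    have hScard := hLw_mem S hS
    have hface : (fun v : Fin n → Bool =>
        (fE S (Multiplicative.ofAdd (cubeEmb v)))⁻¹) =
        (faceEl {v : Fin n → Bool | ∀ i ∈ S, v i = true} (cS S))⁻¹ := by
      funext v
      rw [Pi.inv_apply]
      congr 1
      rw [hfE_cube S v, faceEl]
      have hiff : (S ⊆ Finset.univ.filter (fun i => v i = true)) ↔
          (v ∈ {v : Fin n → Bool | ∀ i ∈ S, v i = true}) := by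
        simp [Finset.subset_iff, Set.mem_setOf_eq]
      by_cases hc : v ∈ {v : Fin n → Bool | ∀ i ∈ S, v i = true}
      · rw [if_pos (hiff.mpr hc), if_pos hc]
      · rw [if_neg (fun hs => hc (hiff.mp hs)), if_neg hc]
    rw [hface]
    refine inv_mem (Subgroup.subset_closure ?_)
    exact ⟨w, {v : Fin n → Bool | ∀ i ∈ S, v i = true}, cS S,
      ⟨S, (fun _ => true), hScard, rfl⟩, hcS_mem S hScard, rfl⟩

end Main

end Stmt9

theorem stmt9 {G : Type*} [Group G] (Gf : ℕ → Subgroup G) (hGf : IsGpFiltration Gf)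
    {n : ℕ} (q : (Fin n → Bool) → G) :
    q ∈ hkCubes Gf n ↔
      ∃ g : Multiplicative (Fin n → ℤ) → G, IsPolyMap (zFilt n) Gf g ∧
        ∀ v : Fin n → Bool, q v = g (Multiplicative.ofAdd (cubeEmb v)) := by
  constructor
  · intro hq
    obtain ⟨g, hpf, hval⟩ := Stmt9.forward hGf hq
    exact ⟨g, (Stmt9.isPolyMap_iff hGf g).mpr hpf, hval⟩
  · rintro ⟨g, hpm, hval⟩
    have hpf := (Stmt9.isPolyMap_iff hGf g).mp hpm
    have hmem := Stmt9.backward_aux hGf (n + 1) 0 (by omega) g hpf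
      (fun v hv => absurd hv (by omega))
    have hq : q = fun v => g (Multiplicative.ofAdd (cubeEmb v)) := funext hval
    rw [hq]
    exact hmem
end
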